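/- arXiv:0712.3019 — 8 statements merged into one kernel-verified Lean document; each statement's English description precedes it below -/
import Mathlib

section
/- Let G be a finite group of order n ≥ 3. Then there exists a unique real number Θ in the interval [1/2, 1] satisfying 2·Θ·log n = log(∑_{x ∈ G} exp(Θ · (log n) · |C(x)|/n)). (Equivalently, the function f(ξ) = 2ξ·log n − log ∑_{x ∈ G} exp(ξ·(log n)·|C(x)|/n) is continuous and strictly increasing on [1/2, 1], is negative at ξ = 1/2, and is nonnegative at ξ = 1.) -/
/-- The defining equation for the group invariant `Θ(G)`:
`2·Θ·log n = log (∑_{x ∈ G} exp (Θ · log n · |C(x)|/n))`, where `n = |G|` and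
`C(x)` is the centralizer of `x` in `G`. -/
def ThetaEqn (G : Type*) [Group G] [Fintype G] (θ : ℝ) : Prop :=
  2 * θ * Real.log (Fintype.card G) =
    Real.log (∑ x : G, Real.exp (θ * Real.log (Fintype.card G) *
      ((Nat.card (Subgroup.centralizer ({x} : Set G)) : ℝ) / (Fintype.card G : ℝ))))

/-- The function `f(ξ) = 2ξ·log n − log ∑_{x ∈ G} exp(ξ·log n·|C(x)|/n)`. -/
noncomputable def thetaFun (G : Type*) [Group G] [Fintype G] (ξ : ℝ) : ℝ :=
  2 * ξ * Real.log (Fintype.card G) -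
    Real.log (∑ x : G, Real.exp (ξ * Real.log (Fintype.card G) *
      ((Nat.card (Subgroup.centralizer ({x} : Set G)) : ℝ) / (Fintype.card G : ℝ))))

/-- For a finite group `G` of order `n ≥ 3` there is a unique `Θ ∈ [1/2, 1]` with
`2·Θ·log n = log (∑_{x ∈ G} exp (Θ · log n · |C(x)|/n))`.  Equivalently, the function
`f(ξ) = 2ξ·log n − log ∑_x exp(ξ·log n·|C(x)|/n)` is continuous and strictly increasing
on `[1/2, 1]`, negative at `1/2` and nonnegative at `1`. -/
theorem theta_exists_unique (G : Type*) [Group G] [Fintype G]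
    (hG : 3 ≤ Fintype.card G) :
    (∃! θ : ℝ, θ ∈ Set.Icc (1/2 : ℝ) 1 ∧ ThetaEqn G θ) ∧
    ContinuousOn (thetaFun G) (Set.Icc (1/2 : ℝ) 1) ∧
    StrictMonoOn (thetaFun G) (Set.Icc (1/2 : ℝ) 1) ∧
    thetaFun G (1/2) < 0 ∧ 0 ≤ thetaFun G 1 := by
  have hn0 : 0 < Fintype.card G := by omega
  have : Nonempty G := Fintype.card_pos_iff.mp hn0
  set n : ℝ := (Fintype.card G : ℝ) with hn
  have hn1 : (1:ℝ) < n := by rw [hn]; exact_mod_cast by omega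
  set L : ℝ := Real.log n with hLdef
  have hL : 0 < L := Real.log_pos hn1
  set c : G → ℝ := fun x =>
    (Nat.card (Subgroup.centralizer ({x} : Set G)) : ℝ) / n with hc
  have hc0 : ∀ x, 0 < c x := fun x =>
    div_pos (by exact_mod_cast Nat.card_pos) (by linarith)
  have hc1 : ∀ x, c x ≤ 1 := by
    intro x
    rw [hc]
    rw [div_le_one (by linarith)]
    have h := (Subgroup.card_le_card_group (Subgroup.centralizer ({x} : Set G))).trans
      (le_of_eq Nat.card_eq_fintype_card)
    rw [hn]
    exact_mod_cast h
  set S : ℝ → ℝ := fun ξ => ∑ x : G, Real.exp (ξ * L * c x) with hSdef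
  have hfun : ∀ ξ, thetaFun G ξ = 2 * ξ * L - Real.log (S ξ) := fun ξ => rfl
  have hEqn : ∀ θ, ThetaEqn G θ ↔ thetaFun G θ = 0 := by
    intro θ
    rw [hfun, ThetaEqn, sub_eq_zero]
  have hSpos : ∀ ξ, 0 < S ξ :=
    fun ξ => Finset.sum_pos (fun x _ => Real.exp_pos _) Finset.univ_nonempty
  -- continuity
  have hScont : Continuous S := by
    apply continuous_finset_sum
    intro x _
    exact Real.continuous_exp.comp ((continuous_id.mul continuous_const).mul continuous_const)
  have hcont : Continuous (thetaFun G) := by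
    have : Continuous fun ξ => 2 * ξ * L - Real.log (S ξ) := by
      apply Continuous.sub
      · exact (continuous_const.mul continuous_id).mul continuous_const
      · exact continuous_iff_continuousAt.mpr fun ξ =>
          (Real.continuousAt_log (hSpos ξ).ne').comp hScont.continuousAt
    simpa [funext hfun] using this
  -- strict monotonicity
  have hmono : StrictMonoOn (thetaFun G) (Set.Icc (1/2 : ℝ) 1) := by
    intro a _ b _ hab
    rw [hfun, hfun]
    have hS : S b ≤ Real.exp ((b - a) * L) * S a := by
      rw [hSdef, Finset.mul_sum]
      apply Finset.sum_le_sum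
      intro x _
      rw [← Real.exp_add]
      apply Real.exp_le_exp.mpr
      have h1 : b * L * c x = (b - a) * L * c x + a * L * c x := by ring
      rw [h1]
      have : (b - a) * L * c x ≤ (b - a) * L * 1 :=
        mul_le_mul_of_nonneg_left (hc1 x) (by nlinarith)
      linarith
    have hlog : Real.log (S b) ≤ (b - a) * L + Real.log (S a) := by
      calc Real.log (S b) ≤ Real.log (Real.exp ((b - a) * L) * S a) :=
            Real.log_le_log (hSpos b) hS
        _ = (b - a) * L + Real.log (S a) := by
            rw [Real.log_mul (Real.exp_pos _).ne' (hSpos a).ne', Real.log_exp]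
    nlinarith
  -- value at 1/2
  have hhalf : thetaFun G (1/2) < 0 := by
    rw [hfun]
    have hSn : n < S (1/2) := by
      have : (n : ℝ) = ∑ _x : G, (1:ℝ) := by simp [hn]
      rw [this, hSdef]
      apply Finset.sum_lt_sum_of_nonempty Finset.univ_nonempty
      intro x _
      exact Real.one_lt_exp_iff.mpr (mul_pos (mul_pos (by norm_num) hL) (hc0 x))
    have := Real.log_lt_log (by linarith) hSn
    rw [← hLdef] at this
    linarith
  -- value at 1
  have hone : 0 ≤ thetaFun G 1 := by
    rw [hfun]
    have hSn : S 1 ≤ n * n := by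
      have hterm : ∀ x : G, Real.exp (1 * L * c x) ≤ n := by
        intro x
        have hconv := convexOn_exp.2 (Set.mem_univ (0:ℝ)) (Set.mem_univ L)
          (by linarith [hc1 x] : (0:ℝ) ≤ 1 - c x) (le_of_lt (hc0 x))
          (by ring : (1 - c x) + c x = 1)
        rw [Real.exp_zero] at hconv
        have hexpL : Real.exp L = n := Real.exp_log (by linarith)
        rw [hexpL] at hconv
        simp only [smul_eq_mul] at hconv
        have h2 : (1 - c x) * 1 + c x * n ≤ n := by nlinarith [hc0 x, hc1 x]
        calc Real.exp (1 * L * c x) = Real.exp ((1 - c x) * (0:ℝ) + c x * L) := by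
              congr 1; ring
          _ ≤ (1 - c x) * 1 + c x * n := hconv
          _ ≤ n := h2
      calc S 1 = ∑ x : G, Real.exp (1 * L * c x) := rfl
        _ ≤ ∑ _x : G, n := Finset.sum_le_sum fun x _ => hterm x
        _ = n * n := by simp [hn, mul_comm]
    have : Real.log (S 1) ≤ Real.log (n * n) := Real.log_le_log (hSpos 1) hSn
    rw [Real.log_mul (by linarith) (by linarith), ← hLdef] at this
    linarith
  refine ⟨?_, hcont.continuousOn, hmono, hhalf, hone⟩
  have h0mem : (0:ℝ) ∈ Set.Icc (thetaFun G (1/2)) (thetaFun G 1) := ⟨le_of_lt hhalf, hone⟩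
  obtain ⟨θ, hθmem, hθeq⟩ :=
    intermediate_value_Icc (by norm_num : (1:ℝ)/2 ≤ 1) hcont.continuousOn h0mem
  refine ⟨θ, ⟨hθmem, (hEqn θ).mpr hθeq⟩, ?_⟩
  rintro θ' ⟨hθ'mem, hθ'eq⟩
  exact hmono.injOn hθ'mem hθmem (by rw [(hEqn θ').mp hθ'eq, hθeq])
end

section
/- Let G be a finite group of order n ≥ 3 and let Z(G) = {g ∈ G : ∀ x ∈ G, g*x = x*g} be its center. Then Θ(G) ≤ max{ (2/3)·(1 + log 2 / log n), (log|Z(G)| + log 2) / log n }. -/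
/-- If `G` is a finite group of order `n ≥ 3` with center `Z(G)`, then
`Θ(G) ≤ max { (2/3)·(1 + log 2 / log n), (log |Z(G)| + log 2) / log n }`. -/
theorem theta_upper_bound (G : Type*) [Group G] [Fintype G]
    (hG : 3 ≤ Fintype.card G)
    (θ : ℝ) (hθ : θ ∈ Set.Icc (1/2 : ℝ) 1) (hθeq : ThetaEqn G θ) :
    θ ≤ max ((2/3) * (1 + Real.log 2 / Real.log (Fintype.card G)))
      ((Real.log (Nat.card (Subgroup.center G)) + Real.log 2) / Real.log (Fintype.card G)) := by
  classical
  obtain ⟨hθ1, hθ2⟩ := hθ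
  set n : ℕ := Fintype.card G with hn
  have hn1 : 1 < n := by omega
  have hn0 : (0:ℝ) < n := by exact_mod_cast Nat.lt_of_lt_of_le Nat.zero_lt_one hn1.le
  set L : ℝ := Real.log n with hLdef
  have hL : 0 < L := Real.log_pos (by exact_mod_cast hn1)
  have hθL : 0 ≤ θ * L := mul_nonneg (by linarith) hL.le
  set Z : ℕ := Nat.card (Subgroup.center G) with hZ
  have hZ1 : 1 ≤ Z := Nat.one_le_iff_ne_zero.mpr (Nat.card_pos).ne'
  set S : ℝ := ∑ x : G, Real.exp (θ * L *
      ((Nat.card (Subgroup.centralizer ({x} : Set G)) : ℝ) / (n : ℝ))) with hS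
  have hSpos : 0 < S := Finset.sum_pos (fun x _ => Real.exp_pos _)
    ⟨1, Finset.mem_univ 1⟩
  have hSeq : Real.exp (2 * θ * L) = S := by
    rw [hθeq, Real.exp_log hSpos]
  -- per-term bounds
  have hterm : ∀ x : G, Real.exp (θ * L *
      ((Nat.card (Subgroup.centralizer ({x} : Set G)) : ℝ) / (n : ℝ))) ≤
      (if x ∈ Subgroup.center G then Real.exp (θ * L) else Real.exp (θ * L / 2)) := by
    intro x
    by_cases hx : x ∈ Subgroup.center G
    · simp only [hx, if_true]
      apply Real.exp_le_exp.mpr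
      have hcle : (Nat.card (Subgroup.centralizer ({x} : Set G)) : ℝ) ≤ n := by
        have := Subgroup.card_le_card_group (Subgroup.centralizer ({x} : Set G))
        rw [Nat.card_eq_fintype_card (α := G)] at this
        exact_mod_cast this
      have : (Nat.card (Subgroup.centralizer ({x} : Set G)) : ℝ) / n ≤ 1 :=
        (div_le_one hn0).mpr hcle
      nlinarith
    · simp only [hx, if_false]
      apply Real.exp_le_exp.mpr
      have hne : Subgroup.centralizer ({x} : Set G) ≠ ⊤ := by
        intro h
        exact hx (Subgroup.centralizer_eq_top_iff_subset.mp h rfl)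
      have hidx : 2 ≤ (Subgroup.centralizer ({x} : Set G)).index :=
        Subgroup.one_lt_index_of_ne_top hne
      have hcard : Nat.card (Subgroup.centralizer ({x} : Set G)) *
          (Subgroup.centralizer ({x} : Set G)).index = n := by
        rw [Subgroup.card_mul_index, Nat.card_eq_fintype_card]
      have h2c : 2 * Nat.card (Subgroup.centralizer ({x} : Set G)) ≤ n := by
        calc 2 * Nat.card (Subgroup.centralizer ({x} : Set G))
            ≤ (Subgroup.centralizer ({x} : Set G)).index *
              Nat.card (Subgroup.centralizer ({x} : Set G)) :=
              Nat.mul_le_mul_right _ hidx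
          _ = n := by rw [mul_comm]; exact hcard
      have : (Nat.card (Subgroup.centralizer ({x} : Set G)) : ℝ) / n ≤ 1/2 := by
        rw [div_le_div_iff₀ hn0 (by norm_num)]
        have : (2 * Nat.card (Subgroup.centralizer ({x} : Set G)) : ℝ) ≤ n := by
          exact_mod_cast h2c
        linarith
      nlinarith
  have hsum : S ≤ Z * Real.exp (θ * L) + n * Real.exp (θ * L / 2) := by
    calc S ≤ ∑ x : G, (if x ∈ Subgroup.center G then Real.exp (θ * L)
        else Real.exp (θ * L / 2)) := Finset.sum_le_sum (fun x _ => hterm x)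
    _ = (Finset.univ.filter (· ∈ Subgroup.center G)).card * Real.exp (θ * L)
        + (Finset.univ.filter (¬ · ∈ Subgroup.center G)).card * Real.exp (θ * L / 2) := by
        rw [Finset.sum_ite, Finset.sum_const, Finset.sum_const]
        simp [nsmul_eq_mul]
    _ ≤ Z * Real.exp (θ * L) + n * Real.exp (θ * L / 2) := by
        have h1 : (Finset.univ.filter (· ∈ Subgroup.center G)).card = Z := by
          rw [hZ, Nat.card_eq_fintype_card, Fintype.card_subtype]
        have h2 : (Finset.univ.filter (¬ · ∈ Subgroup.center G)).card ≤ n := by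
          rw [hn]; exact (Finset.card_filter_le _ _).trans (by simp)
        have h2' : ((Finset.univ.filter (¬ · ∈ Subgroup.center G)).card : ℝ) ≤ n := by
          exact_mod_cast h2
        rw [h1]
        have := Real.exp_pos (θ * L / 2)
        nlinarith
  rcases le_total ((n:ℝ) * Real.exp (θ * L / 2)) ((Z:ℝ) * Real.exp (θ * L)) with hc | hc
  · -- center term dominates
    refine le_max_of_le_right ?_
    have hkey : Real.exp (2 * θ * L) ≤ 2 * Z * Real.exp (θ * L) := by
      rw [hSeq]; linarith
    have hE : Real.exp (2 * θ * L) = Real.exp (θ * L) * Real.exp (θ * L) := by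
      rw [← Real.exp_add]; ring_nf
    have hle : Real.exp (θ * L) ≤ 2 * Z := by
      have hEpos := Real.exp_pos (θ * L)
      nlinarith [hE ▸ hkey]
    have hlog : θ * L ≤ Real.log (2 * Z) := by
      have := Real.log_le_log (Real.exp_pos _) hle
      rwa [Real.log_exp] at this
    have hZr : (1:ℝ) ≤ Z := by exact_mod_cast hZ1
    rw [Real.log_mul (by norm_num) (by positivity)] at hlog
    rw [le_div_iff₀ hL]
    linarith
  · refine le_max_of_le_left ?_
    have hkey : Real.exp (2 * θ * L) ≤ 2 * n * Real.exp (θ * L / 2) := by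
      rw [hSeq]; linarith
    have hE : Real.exp (2 * θ * L) = Real.exp (3 * θ * L / 2) * Real.exp (θ * L / 2) := by
      rw [← Real.exp_add]; ring_nf
    have hle : Real.exp (3 * θ * L / 2) ≤ 2 * n := by
      have hFpos := Real.exp_pos (θ * L / 2)
      nlinarith [hE ▸ hkey]
    have hlog : 3 * θ * L / 2 ≤ Real.log 2 + L := by
      have := Real.log_le_log (Real.exp_pos _) hle
      rwa [Real.log_exp, Real.log_mul (by norm_num) hn0.ne', hLdef] at this
    have : (2/3) * (1 + Real.log 2 / L) * L = (2/3) * (L + Real.log 2) := by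
      field_simp
    have hkey2 : θ * L ≤ (2/3) * (1 + Real.log 2 / L) * L := by
      rw [this]; linarith
    exact (mul_le_mul_iff_of_pos_right hL).mp hkey2
end

section
/- Let G be a finite group of order n ≥ 3. Then G is abelian if and only if Θ(G) = 1. -/
/-- A finite group `G` of order `n ≥ 3` is abelian if and only if `Θ(G) = 1`. -/
theorem theta_eq_one_iff_abelian (G : Type*) [Group G] [Fintype G]
    (hG : 3 ≤ Fintype.card G)
    (θ : ℝ) (hθ : θ ∈ Set.Icc (1/2 : ℝ) 1) (hθeq : ThetaEqn G θ) :
    (∀ a b : G, a * b = b * a) ↔ θ = 1 := by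
  classical
  have hn1 : 1 < Fintype.card G := lt_of_lt_of_le (by norm_num) hG
  have hn0 : (0 : ℝ) < Fintype.card G := by exact_mod_cast Nat.zero_lt_of_lt hn1
  have hL : 0 < Real.log (Fintype.card G) := Real.log_pos (by exact_mod_cast hn1)
  unfold ThetaEqn at hθeq
  constructor
  · intro hab
    have hcent : ∀ x : G,
        (Nat.card (Subgroup.centralizer ({x} : Set G)) : ℝ) = (Fintype.card G : ℝ) := by
      intro x
      have htop : Subgroup.centralizer ({x} : Set G) = ⊤ := by
        rw [eq_top_iff]
        intro g _
        rw [Subgroup.mem_centralizer_iff]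
        intro y hy
        rw [Set.mem_singleton_iff] at hy
        subst hy
        exact hab y g
      rw [htop, Subgroup.card_top, Nat.card_eq_fintype_card]
    have hsum : (∑ x : G, Real.exp (θ * Real.log (Fintype.card G) *
        ((Nat.card (Subgroup.centralizer ({x} : Set G)) : ℝ) / (Fintype.card G : ℝ))))
        = (Fintype.card G : ℝ) * Real.exp (θ * Real.log (Fintype.card G)) := by
      have : ∀ x : G, Real.exp (θ * Real.log (Fintype.card G) *
          ((Nat.card (Subgroup.centralizer ({x} : Set G)) : ℝ) / (Fintype.card G : ℝ)))
          = Real.exp (θ * Real.log (Fintype.card G)) := by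
        intro x
        rw [hcent x, div_self (ne_of_gt hn0), mul_one]
      rw [Finset.sum_congr rfl fun x _ => this x]
      simp [Finset.card_univ, mul_comm]
    rw [hsum, Real.log_mul (ne_of_gt hn0) (Real.exp_ne_zero _), Real.log_exp] at hθeq
    -- 2θL = L + θL
    nlinarith [hθeq, hL]
  · intro hθ1
    subst hθ1
    by_contra hnab
    push_neg at hnab
    obtain ⟨a, b, hab⟩ := hnab
    have hb : b ∉ Subgroup.centralizer ({a} : Set G) := by
      rw [Subgroup.mem_centralizer_iff]
      intro h
      exact hab (h a (Set.mem_singleton a))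
    have hlt : Nat.card (Subgroup.centralizer ({a} : Set G)) < Fintype.card G := by
      rw [Nat.card_eq_fintype_card]
      exact Fintype.card_subtype_lt (p := fun y => y ∈ Subgroup.centralizer ({a} : Set G)) hb
    have hle : ∀ x : G, Nat.card (Subgroup.centralizer ({x} : Set G)) ≤ Fintype.card G := by
      intro x
      rw [← Nat.card_eq_fintype_card]
      exact Subgroup.card_le_card_group _
    -- each term ≤ n, with strict for a
    have hterm_le : ∀ x : G, Real.exp (1 * Real.log (Fintype.card G) *
        ((Nat.card (Subgroup.centralizer ({x} : Set G)) : ℝ) / (Fintype.card G : ℝ)))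
        ≤ (Fintype.card G : ℝ) := by
      intro x
      have h1 : (Nat.card (Subgroup.centralizer ({x} : Set G)) : ℝ) / (Fintype.card G : ℝ) ≤ 1 := by
        rw [div_le_one hn0]
        exact_mod_cast hle x
      calc Real.exp (1 * Real.log (Fintype.card G) *
          ((Nat.card (Subgroup.centralizer ({x} : Set G)) : ℝ) / (Fintype.card G : ℝ)))
          ≤ Real.exp (Real.log (Fintype.card G)) := by
            apply Real.exp_le_exp.mpr
            rw [one_mul]
            exact mul_le_of_le_one_right hL.le h1
        _ = (Fintype.card G : ℝ) := Real.exp_log hn0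
    have hterm_lt : Real.exp (1 * Real.log (Fintype.card G) *
        ((Nat.card (Subgroup.centralizer ({a} : Set G)) : ℝ) / (Fintype.card G : ℝ)))
        < (Fintype.card G : ℝ) := by
      have h1 : (Nat.card (Subgroup.centralizer ({a} : Set G)) : ℝ) / (Fintype.card G : ℝ) < 1 := by
        rw [div_lt_one hn0]
        exact_mod_cast hlt
      calc Real.exp (1 * Real.log (Fintype.card G) *
          ((Nat.card (Subgroup.centralizer ({a} : Set G)) : ℝ) / (Fintype.card G : ℝ)))
          < Real.exp (Real.log (Fintype.card G)) := by
            apply Real.exp_lt_exp.mpr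
            rw [one_mul]
            exact mul_lt_of_lt_one_right hL h1
        _ = (Fintype.card G : ℝ) := Real.exp_log hn0
    have hSlt : (∑ x : G, Real.exp (1 * Real.log (Fintype.card G) *
        ((Nat.card (Subgroup.centralizer ({x} : Set G)) : ℝ) / (Fintype.card G : ℝ))))
        < (Fintype.card G : ℝ) * (Fintype.card G : ℝ) := by
      calc (∑ x : G, Real.exp (1 * Real.log (Fintype.card G) *
          ((Nat.card (Subgroup.centralizer ({x} : Set G)) : ℝ) / (Fintype.card G : ℝ))))
          < ∑ _x : G, (Fintype.card G : ℝ) := by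
            apply Finset.sum_lt_sum (fun x _ => hterm_le x)
            exact ⟨a, Finset.mem_univ a, hterm_lt⟩
        _ = (Fintype.card G : ℝ) * (Fintype.card G : ℝ) := by
            simp [Finset.card_univ, mul_comm]
    have hSpos : (0:ℝ) < ∑ x : G, Real.exp (1 * Real.log (Fintype.card G) *
        ((Nat.card (Subgroup.centralizer ({x} : Set G)) : ℝ) / (Fintype.card G : ℝ))) :=
      Finset.sum_pos (fun x _ => Real.exp_pos _) Finset.univ_nonempty
    have hSeq : (∑ x : G, Real.exp (1 * Real.log (Fintype.card G) *
        ((Nat.card (Subgroup.centralizer ({x} : Set G)) : ℝ) / (Fintype.card G : ℝ))))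
        = (Fintype.card G : ℝ) * (Fintype.card G : ℝ) := by
      have := congrArg Real.exp hθeq
      rw [Real.exp_log hSpos] at this
      rw [← this, mul_one, two_mul, Real.exp_add, Real.exp_log hn0]
    linarith [hSlt, hSeq.ge]
end

section
/- Let G be a finite group of order n ≥ 3 and let R = R(G) be the number of conjugacy classes of G. Then Θ(G) ≥ 1/(2 − R/n), and in particular Θ(G) > 1/2. -/
/-- Burnside-type identity: the sum of centralizer orders equals `R·n`. -/
theorem sum_card_centralizer (G : Type*) [Group G] [Fintype G] :
    ∑ x : G, (Nat.card (Subgroup.centralizer ({x} : Set G)) : ℕ) =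
      Nat.card (ConjClasses G) * Fintype.card G := by
  classical
  have h := card_comm_eq_card_conjClasses_mul_card G
  rw [Nat.card_eq_fintype_card (α := G)] at h
  rw [← h]
  rw [Nat.card_eq_fintype_card,
    Fintype.card_congr (Equiv.subtypeProdEquivSigmaSubtype Commute), Fintype.card_sigma]
  refine Finset.sum_congr rfl fun x _ => ?_
  rw [Nat.card_eq_fintype_card]
  refine Fintype.card_congr (Equiv.subtypeEquivRight fun y => ?_)
  rw [Subgroup.mem_centralizer_singleton_iff]
  exact ⟨fun h => h.symm, fun h => h.symm⟩

/-- If `G` is a finite group of order `n ≥ 3` with `R` conjugacy classes, then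
`Θ(G) ≥ 1/(2 − R/n) > 1/2`. -/
theorem theta_ge_conj_classes (G : Type*) [Group G] [Fintype G]
    (hG : 3 ≤ Fintype.card G)
    (θ : ℝ) (hθ : θ ∈ Set.Icc (1/2 : ℝ) 1) (hθeq : ThetaEqn G θ) :
    1 / (2 - (Nat.card (ConjClasses G) : ℝ) / (Fintype.card G : ℝ)) ≤ θ ∧
    (1 : ℝ) / 2 < 1 / (2 - (Nat.card (ConjClasses G) : ℝ) / (Fintype.card G : ℝ)) := by
  classical
  set n : ℕ := Fintype.card G with hn
  set R : ℕ := Nat.card (ConjClasses G) with hR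
  have hn0 : (0:ℝ) < n := by positivity
  have hR1 : 1 ≤ R := Nat.one_le_iff_ne_zero.mpr (Nat.card_ne_zero.mpr ⟨inferInstance, inferInstance⟩)
  have hRn : (R:ℝ) ≤ n := by
    have h := Nat.card_le_card_of_surjective _ (ConjClasses.mk_surjective (α := G))
    rw [Nat.card_eq_fintype_card (α := G)] at h
    exact_mod_cast h
  have hRn0 : (0:ℝ) < (R:ℝ)/n := by positivity
  have hRn1 : (R:ℝ)/n ≤ 1 := by rw [div_le_one hn0]; exact hRn
  have hden : (0:ℝ) < 2 - (R:ℝ)/n := by linarith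
  -- log n > 0
  have hL : (0:ℝ) < Real.log n := Real.log_pos (by exact_mod_cast lt_of_lt_of_le (by norm_num) hG)
  set L : ℝ := Real.log n with hLdef
  -- the summand data
  set c : G → ℝ := fun x => (Nat.card (Subgroup.centralizer ({x} : Set G)) : ℝ) with hc
  have hsumc : ∑ x : G, c x = (R:ℝ) * n := by
    rw [hc]
    push_cast [← Nat.cast_sum]
    exact_mod_cast congrArg (fun m : ℕ => (m:ℝ)) (sum_card_centralizer G)
  -- Jensen: exp(∑ (1/n) • a x) ≤ ∑ (1/n) * exp (a x)
  set a : G → ℝ := fun x => θ * L * (c x / n) with ha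
  have hjensen : Real.exp (∑ x : G, (1/(n:ℝ)) • a x) ≤ ∑ x : G, (1/(n:ℝ)) * Real.exp (a x) := by
    have := convexOn_exp.map_sum_le (t := Finset.univ) (w := fun _ : G => 1/(n:ℝ)) (p := a)
      (fun _ _ => by positivity) (by rw [Finset.sum_const, Finset.card_univ, nsmul_eq_mul]; field_simp; rfl)
      (fun _ _ => Set.mem_univ _)
    simpa using this
  have hsa : ∑ x : G, (1/(n:ℝ)) • a x = θ * L * (R:ℝ) / n := by
    simp only [smul_eq_mul, ha]
    rw [← Finset.mul_sum, ← Finset.mul_sum, ← Finset.sum_div, hsumc]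
    field_simp
  set S : ℝ := ∑ x : G, Real.exp (a x) with hS
  have hSpos : 0 < S := Finset.sum_pos (fun x _ => Real.exp_pos _) ⟨Classical.arbitrary G, Finset.mem_univ _⟩
  have hkey : (n:ℝ) * Real.exp (θ * L * (R:ℝ) / n) ≤ S := by
    have h2 : ∑ x : G, (1/(n:ℝ)) * Real.exp (a x) = S / n := by
      rw [hS, Finset.sum_div]
      exact Finset.sum_congr rfl fun x _ => by ring
    rw [hsa, h2] at hjensen
    rw [mul_comm]
    exact (le_div_iff₀ hn0).mp hjensen
  have hlog : Real.log n + θ * L * (R:ℝ) / n ≤ 2 * θ * L := by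
    have := Real.log_le_log (by positivity) hkey
    rw [Real.log_mul (ne_of_gt hn0) (ne_of_gt (Real.exp_pos _)), Real.log_exp] at this
    have heq : Real.log S = 2 * θ * L := by
      rw [hθeq]
    rw [heq] at this
    exact this
  -- conclude
  have hθpos : 0 < θ := lt_of_lt_of_le (by norm_num) hθ.1
  have hineq : 1 ≤ θ * (2 - (R:ℝ)/n) := by
    have h3 : L * (1 + θ * ((R:ℝ)/n)) ≤ L * (2 * θ) := by
      calc L * (1 + θ * ((R:ℝ)/n)) = Real.log n + θ * L * (R:ℝ) / n := by rw [hLdef]; ring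
        _ ≤ 2 * θ * L := hlog
        _ = L * (2 * θ) := by ring
    have h4 : 1 + θ * ((R:ℝ)/n) ≤ 2 * θ := le_of_mul_le_mul_left (by linarith [h3]) hL
    nlinarith
  constructor
  · rw [div_le_iff₀ hden]
    linarith [hineq]
  · rw [div_lt_div_iff₀ (by norm_num) hden]
    linarith
end

section
/- Let m ≥ 2 and let D_{2m} be the dihedral group of order n = 2m. Then (2/3)·(1 − log 2 / log n) ≤ Θ(D_{2m}) ≤ (2/3)·(1 + log 2 / log n). -/
namespace ThetaDihedralAux

open DihedralGroup Finset

/-- The equivalence `ZMod m ⊕ ZMod m ≃ DihedralGroup m`. -/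
def dEquiv (m : ℕ) : (ZMod m) ⊕ (ZMod m) ≃ DihedralGroup m where
  toFun x := match x with
    | Sum.inl j => DihedralGroup.r j
    | Sum.inr j => DihedralGroup.sr j
  invFun g := match g with
    | DihedralGroup.r j => Sum.inl j
    | DihedralGroup.sr j => Sum.inr j
  left_inv := by rintro (x | x) <;> rfl
  right_inv := by rintro (x | x) <;> rfl

lemma sum_dihedral {m : ℕ} [NeZero m] (f : DihedralGroup m → ℝ) :
    ∑ x : DihedralGroup m, f x
      = ∑ j : ZMod m, f (DihedralGroup.r j) + ∑ j : ZMod m, f (DihedralGroup.sr j) := by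
  rw [← Equiv.sum_comp (dEquiv m) f, Fintype.sum_sum_type]
  rfl

lemma two_mul_cases {m : ℕ} [NeZero m] {j : ZMod m} (h : 2 * j = 0) :
    j = 0 ∨ 2 * j.val = m := by
  have hd : m ∣ 2 * j.val := by
    rw [← ZMod.natCast_eq_zero_iff]
    push_cast
    rw [ZMod.natCast_zmod_val]
    exact h
  have hlt : j.val < m := ZMod.val_lt j
  rcases hd with ⟨k, hk⟩
  have hmpos : 0 < m := Nat.pos_of_ne_zero (NeZero.ne m)
  have hk2 : k < 2 := by
    by_contra hc
    push_neg at hc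
    have := Nat.mul_le_mul_left m hc
    omega
  interval_cases k
  · left
    have : j.val = 0 := by omega
    exact (ZMod.val_eq_zero j).mp this
  · right; omega

lemma torsion_card_le_two (m : ℕ) [NeZero m] :
    Nat.card {j : ZMod m // 2 * j = 0} ≤ 2 := by
  have hinj : Function.Injective (fun a : {j : ZMod m // 2 * j = 0} => decide (a.1 = 0)) := by
    rintro ⟨a, ha⟩ ⟨b, hb⟩ h
    simp only [decide_eq_decide] at h
    rcases two_mul_cases ha with h1 | h1 <;> rcases two_mul_cases hb with h2 | h2
    · exact Subtype.ext (h1.trans h2.symm)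
    · exfalso
      have hb0 : b ≠ 0 := by
        intro hb0
        rw [hb0, ZMod.val_zero] at h2
        exact (NeZero.ne m) (by omega)
      exact hb0 (h.mp h1)
    · exfalso
      have ha0 : a ≠ 0 := by
        intro ha0
        rw [ha0, ZMod.val_zero] at h1
        exact (NeZero.ne m) (by omega)
      exact ha0 (h.mpr h2)
    · exact Subtype.ext (ZMod.val_injective m (show a.val = b.val by omega))
  simpa using Nat.card_le_card_of_injective _ hinj

lemma torsion_card_le_one (m : ℕ) [NeZero m] (hodd : Odd m) :
    Nat.card {j : ZMod m // 2 * j = 0} ≤ 1 := by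
  have hall : ∀ a : {j : ZMod m // 2 * j = 0}, a.1 = 0 := by
    rintro ⟨a, ha⟩
    rcases two_mul_cases ha with h | h
    · exact h
    · exfalso
      rcases hodd with ⟨k, hk⟩
      omega
  have hinj : Function.Injective (fun _ : {j : ZMod m // 2 * j = 0} => (0 : Fin 1)) := by
    rintro ⟨a, ha⟩ ⟨b, hb⟩ _
    exact Subtype.ext ((hall ⟨a, ha⟩).trans (hall ⟨b, hb⟩).symm)
  simpa using Nat.card_le_card_of_injective _ hinj

lemma two_mul_torsion_le (m : ℕ) [NeZero m] (hm : 3 ≤ m) :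
    2 * Nat.card {j : ZMod m // 2 * j = 0} ≤ m := by
  rcases Nat.even_or_odd m with he | ho
  · have h2 := torsion_card_le_two m
    rcases he with ⟨k, hk⟩
    omega
  · have h1 := torsion_card_le_one m ho
    omega

/-- The rotations all commute with `r i`, so `m ≤ |C(r i)|`. -/
lemma le_card_cent_r {m : ℕ} [NeZero m] (i : ZMod m) :
    m ≤ Nat.card (Subgroup.centralizer ({DihedralGroup.r i} : Set (DihedralGroup m))) := by
  have hinj : Function.Injective (fun j : ZMod m =>
      (⟨DihedralGroup.r j, by
        rw [Subgroup.mem_centralizer_singleton_iff]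
        simp [add_comm]⟩ :
        Subgroup.centralizer ({DihedralGroup.r i} : Set (DihedralGroup m)))) := by
    intro a b h
    simpa [Subtype.ext_iff] using h
  simpa using Nat.card_le_card_of_injective _ hinj

/-- If `2i ≠ 0`, no reflection commutes with `r i`, so `|C(r i)| ≤ m`. -/
lemma card_cent_r_le {m : ℕ} [NeZero m] {i : ZMod m} (hi : 2 * i ≠ 0) :
    Nat.card (Subgroup.centralizer ({DihedralGroup.r i} : Set (DihedralGroup m))) ≤ m := by
  have hsr : ∀ a : ZMod m,
      DihedralGroup.sr a ∉ Subgroup.centralizer ({DihedralGroup.r i} : Set (DihedralGroup m)) := by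
    intro a ha
    rw [Subgroup.mem_centralizer_singleton_iff] at ha
    simp only [DihedralGroup.sr_mul_r, DihedralGroup.r_mul_sr, DihedralGroup.sr.injEq] at ha
    exact hi (by linear_combination ha)
  have hinj : Function.Injective
      (fun g : Subgroup.centralizer ({DihedralGroup.r i} : Set (DihedralGroup m)) =>
        match g with
        | ⟨DihedralGroup.r j, _⟩ => j
        | ⟨DihedralGroup.sr j, _⟩ => j) := by
    rintro ⟨(a | a), ha⟩ ⟨(b | b), hb⟩ h
    · simp only at h
      exact Subtype.ext (congrArg DihedralGroup.r h)
    · exact absurd hb (hsr b)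
    · exact absurd ha (hsr a)
    · exact absurd ha (hsr a)
  simpa using Nat.card_le_card_of_injective _ hinj

/-- Injection from `C(sr i)` into the 2-torsion times `Bool`. -/
def srMap {m : ℕ} (i : ZMod m) :
    Subgroup.centralizer ({DihedralGroup.sr i} : Set (DihedralGroup m)) →
      {j : ZMod m // 2 * j = 0} × Bool
  | ⟨DihedralGroup.r j, h⟩ => (⟨j, by
      rw [Subgroup.mem_centralizer_singleton_iff] at h
      simp only [DihedralGroup.r_mul_sr, DihedralGroup.sr_mul_r, DihedralGroup.sr.injEq] at h
      linear_combination -h⟩, false)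
  | ⟨DihedralGroup.sr j, h⟩ => (⟨j - i, by
      rw [Subgroup.mem_centralizer_singleton_iff] at h
      simp only [DihedralGroup.sr_mul_sr, DihedralGroup.r.injEq] at h
      linear_combination -h⟩, true)

lemma card_cent_sr_le {m : ℕ} [NeZero m] (i : ZMod m) :
    Nat.card (Subgroup.centralizer ({DihedralGroup.sr i} : Set (DihedralGroup m)))
      ≤ 2 * Nat.card {j : ZMod m // 2 * j = 0} := by
  have hinj : Function.Injective (srMap i) := by
    rintro ⟨(a | a), ha⟩ ⟨(b | b), hb⟩ h <;>
      simp only [srMap, Prod.mk.injEq, Subtype.mk.injEq] at h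
    · exact Subtype.ext (congrArg DihedralGroup.r h.1)
    · exact absurd h.2 (by simp)
    · exact absurd h.2 (by simp)
    · exact Subtype.ext (congrArg DihedralGroup.sr (by
        have := h.1; linear_combination this))
  have := Nat.card_le_card_of_injective _ hinj
  simpa [Nat.card_prod, mul_comm] using this

/-- Every centralizer has size at most `|G| = 2m`. -/
lemma card_cent_le {m : ℕ} [NeZero m] (x : DihedralGroup m) :
    Nat.card (Subgroup.centralizer ({x} : Set (DihedralGroup m))) ≤ 2 * m := by
  have hinj : Function.Injective
      (Subtype.val : Subgroup.centralizer ({x} : Set (DihedralGroup m)) → DihedralGroup m) :=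
    Subtype.val_injective
  have h1 := Nat.card_le_card_of_injective _ hinj
  have h2 : Nat.card (DihedralGroup m) = 2 * m := by
    rw [Nat.card_eq_fintype_card, DihedralGroup.card]
  omega

end ThetaDihedralAux

set_option maxHeartbeats 2000000 in
open ThetaDihedralAux in
/-- For the dihedral group `D_{2m}` of order `n = 2m` (with `m ≥ 2`):
`(2/3)·(1 − log 2 / log n) ≤ Θ(D_{2m}) ≤ (2/3)·(1 + log 2 / log n)`. -/
theorem theta_dihedral (m : ℕ) [NeZero m] (hm : 2 ≤ m)
    (θ : ℝ) (hθ : θ ∈ Set.Icc (1/2 : ℝ) 1)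
    (hθeq : ThetaEqn (DihedralGroup m) θ) :
    (2/3) * (1 - Real.log 2 / Real.log (2 * m)) ≤ θ ∧
    θ ≤ (2/3) * (1 + Real.log 2 / Real.log (2 * m)) := by
  obtain ⟨hθ1, hθ2⟩ := hθ
  have hm0 : (0:ℝ) < m := by positivity
  have hm2 : (2:ℝ) ≤ m := by exact_mod_cast hm
  have hn1 : (1:ℝ) < 2 * m := by nlinarith
  set L : ℝ := Real.log (2 * m) with hLdef
  have hL : 0 < L := Real.log_pos hn1
  have hlog2 : 0 < Real.log 2 := Real.log_pos one_lt_two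
  have hθL0 : 0 ≤ θ * L := by nlinarith
  -- rewrite the equation
  unfold ThetaEqn at hθeq
  rw [DihedralGroup.card] at hθeq
  push_cast at hθeq
  set S : ℝ := ∑ x : DihedralGroup m, Real.exp (θ * L *
      ((Nat.card (Subgroup.centralizer ({x} : Set (DihedralGroup m))) : ℝ) / (2 * m)))
    with hSdef
  have hθeq' : 2 * θ * L = Real.log S := hθeq
  have hS0 : 0 < S := by
    apply Finset.sum_pos (fun x _ => Real.exp_pos _)
    exact Finset.univ_nonempty
  have hExp : Real.exp (2 * θ * L) = S := by
    rw [hθeq']; exact Real.exp_log hS0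
  -- per-element exponent bounds
  have hterm_le : ∀ (x : DihedralGroup m) (c : ℕ),
      (Nat.card (Subgroup.centralizer ({x} : Set (DihedralGroup m))) ≤ c) →
      Real.exp (θ * L *
        ((Nat.card (Subgroup.centralizer ({x} : Set (DihedralGroup m))) : ℝ) / (2 * m)))
        ≤ Real.exp (θ * L * ((c : ℝ) / (2 * m))) := by
    intro x c hc
    apply Real.exp_le_exp.mpr
    apply mul_le_mul_of_nonneg_left _ hθL0
    apply div_le_div_of_nonneg_right _ (by positivity)
    exact_mod_cast hc
  have hterm_ge : ∀ (x : DihedralGroup m) (c : ℕ),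
      (c ≤ Nat.card (Subgroup.centralizer ({x} : Set (DihedralGroup m)))) →
      Real.exp (θ * L * ((c : ℝ) / (2 * m)))
        ≤ Real.exp (θ * L *
          ((Nat.card (Subgroup.centralizer ({x} : Set (DihedralGroup m))) : ℝ) / (2 * m))) := by
    intro x c hc
    apply Real.exp_le_exp.mpr
    apply mul_le_mul_of_nonneg_left _ hθL0
    apply div_le_div_of_nonneg_right _ (by positivity)
    exact_mod_cast hc
  have hhalf : θ * L * ((m : ℝ) / (2 * m)) = θ * L / 2 := by
    field_simp
  have hfull : θ * L * (((2 * m : ℕ) : ℝ) / (2 * m)) = θ * L := by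
    push_cast
    field_simp
  -- LOWER BOUND
  have hSlow : (m : ℝ) * Real.exp (θ * L / 2) ≤ S := by
    rw [hSdef, sum_dihedral]
    have h1 : (m : ℝ) * Real.exp (θ * L / 2)
        ≤ ∑ j : ZMod m, Real.exp (θ * L *
          ((Nat.card (Subgroup.centralizer
            ({DihedralGroup.r j} : Set (DihedralGroup m))) : ℝ) / (2 * m))) := by
      have : ∀ j : ZMod m, Real.exp (θ * L / 2)
          ≤ Real.exp (θ * L *
            ((Nat.card (Subgroup.centralizer
              ({DihedralGroup.r j} : Set (DihedralGroup m))) : ℝ) / (2 * m))) := by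
        intro j
        rw [← hhalf]
        exact hterm_ge _ m (le_card_cent_r j)
      calc (m : ℝ) * Real.exp (θ * L / 2)
          = ∑ _j : ZMod m, Real.exp (θ * L / 2) := by
            rw [Finset.sum_const, Finset.card_univ, ZMod.card, nsmul_eq_mul]
        _ ≤ _ := Finset.sum_le_sum (fun j _ => this j)
    have h2 : (0:ℝ) ≤ ∑ j : ZMod m, Real.exp (θ * L *
        ((Nat.card (Subgroup.centralizer
          ({DihedralGroup.sr j} : Set (DihedralGroup m))) : ℝ) / (2 * m))) :=
      Finset.sum_nonneg (fun j _ => (Real.exp_pos _).le)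
    linarith
  have hlow : (2/3) * (1 - Real.log 2 / L) ≤ θ := by
    have hkey : Real.log ((m : ℝ) * Real.exp (θ * L / 2)) ≤ 2 * θ * L := by
      rw [hθeq']
      exact Real.log_le_log (by positivity) hSlow
    rw [Real.log_mul (by positivity) (Real.exp_ne_zero _), Real.log_exp] at hkey
    have hlogm : Real.log m = L - Real.log 2 := by
      rw [hLdef, Real.log_mul (by norm_num) (by positivity)]
      ring
    rw [hlogm] at hkey
    have hgoal : (2/3) * (1 - Real.log 2 / L) = (2/3) * (L - Real.log 2) / L := by
      field_simp
    rw [hgoal, div_le_iff₀ hL]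
    nlinarith [hkey]
  refine ⟨hlow, ?_⟩
  -- UPPER BOUND
  rcases eq_or_lt_of_le hm with hm2' | hm3
  · -- m = 2 : the bound equals 1
    have hm2'' : m = 2 := hm2'.symm
    subst hm2''
    have h4 : (2 * ((2:ℕ):ℝ)) = (2:ℝ)^2 := by norm_num
    have : L = 2 * Real.log 2 := by
      rw [hLdef, h4, Real.log_pow]
      push_cast
      ring
    rw [this]
    have : Real.log 2 / (2 * Real.log 2) = 1/2 := by
      rw [div_eq_iff (by positivity)]
      ring
    rw [this]
    linarith
  · have hm3 : 3 ≤ m := hm3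
    have hm3' : (3:ℝ) ≤ m := by exact_mod_cast hm3
    -- exp(θL/2) ≤ m
    have hefm : Real.exp (θ * L / 2) ≤ m := by
      have h1 : θ * L / 2 ≤ L / 2 := by nlinarith
      have h2 : L ≤ 2 * Real.log m := by
        have hmm : (2:ℝ) * m ≤ (m:ℝ) ^ 2 := by nlinarith
        have hlm := Real.log_le_log (by positivity) hmm
        rw [Real.log_pow] at hlm
        rw [hLdef]
        push_cast at hlm
        linarith
      calc Real.exp (θ * L / 2) ≤ Real.exp (Real.log m) := by
            apply Real.exp_le_exp.mpr; linarith
        _ = m := Real.exp_log hm0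
    -- bound on reflections' terms
    have hsrbound : ∀ j : ZMod m, Real.exp (θ * L *
        ((Nat.card (Subgroup.centralizer
          ({DihedralGroup.sr j} : Set (DihedralGroup m))) : ℝ) / (2 * m)))
        ≤ Real.exp (θ * L / 2) := by
      intro j
      rw [← hhalf]
      apply hterm_le
      exact le_trans (card_cent_sr_le j) (two_mul_torsion_le m hm3)
    -- count of central-ish rotations
    have hcardfilter : (Finset.univ.filter (fun j : ZMod m => 2 * j = 0)).card ≤ 2 := by
      have := torsion_card_le_two m
      rwa [Nat.card_eq_fintype_card, Fintype.card_subtype] at this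
    -- bound on rotations' terms
    have hrbound : ∀ j : ZMod m, Real.exp (θ * L *
        ((Nat.card (Subgroup.centralizer
          ({DihedralGroup.r j} : Set (DihedralGroup m))) : ℝ) / (2 * m)))
        ≤ Real.exp (θ * L / 2) + (if 2 * j = 0 then Real.exp (θ * L) else 0) := by
      intro j
      by_cases h2j : 2 * j = 0
      · rw [if_pos h2j]
        have h1 := hterm_le (DihedralGroup.r j) (2 * m) (card_cent_le _)
        rw [hfull] at h1
        have hpos := (Real.exp_pos (θ * L / 2)).le
        linarith
      · rw [if_neg h2j, add_zero]
        have h1 := hterm_le (DihedralGroup.r j) m (card_cent_r_le h2j)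
        rw [hhalf] at h1
        exact h1
    -- total upper bound for S
    have hSup : S ≤ 4 * m * Real.exp (θ * L / 2) := by
      rw [hSdef, sum_dihedral]
      have hsum_sr : ∑ j : ZMod m, Real.exp (θ * L *
          ((Nat.card (Subgroup.centralizer
            ({DihedralGroup.sr j} : Set (DihedralGroup m))) : ℝ) / (2 * m)))
          ≤ (m : ℝ) * Real.exp (θ * L / 2) := by
        calc _ ≤ ∑ _j : ZMod m, Real.exp (θ * L / 2) :=
              Finset.sum_le_sum (fun j _ => hsrbound j)
          _ = (m : ℝ) * Real.exp (θ * L / 2) := by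
              rw [Finset.sum_const, Finset.card_univ, ZMod.card, nsmul_eq_mul]
      have hsum_r : ∑ j : ZMod m, Real.exp (θ * L *
          ((Nat.card (Subgroup.centralizer
            ({DihedralGroup.r j} : Set (DihedralGroup m))) : ℝ) / (2 * m)))
          ≤ (m : ℝ) * Real.exp (θ * L / 2) + 2 * Real.exp (θ * L) := by
        calc _ ≤ ∑ j : ZMod m, (Real.exp (θ * L / 2)
                + (if 2 * j = 0 then Real.exp (θ * L) else 0)) :=
              Finset.sum_le_sum (fun j _ => hrbound j)
          _ = (m : ℝ) * Real.exp (θ * L / 2)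
                + ∑ j : ZMod m, (if 2 * j = 0 then Real.exp (θ * L) else 0) := by
              rw [Finset.sum_add_distrib, Finset.sum_const, Finset.card_univ, ZMod.card,
                nsmul_eq_mul]
          _ ≤ (m : ℝ) * Real.exp (θ * L / 2) + 2 * Real.exp (θ * L) := by
              have hsum_ite : ∑ j : ZMod m, (if 2 * j = 0 then Real.exp (θ * L) else 0)
                  = ((Finset.univ.filter (fun j : ZMod m => 2 * j = 0)).card : ℝ)
                    * Real.exp (θ * L) := by
                rw [← Finset.sum_filter, Finset.sum_const, nsmul_eq_mul]
              rw [hsum_ite]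
              have h2 : ((Finset.univ.filter (fun j : ZMod m => 2 * j = 0)).card : ℝ) ≤ 2 := by
                exact_mod_cast hcardfilter
              nlinarith [(Real.exp_pos (θ * L)).le, Real.exp_pos (θ * L)]
      have hfull2 : Real.exp (θ * L) ≤ (m : ℝ) * Real.exp (θ * L / 2) := by
        have : Real.exp (θ * L) = Real.exp (θ * L / 2) * Real.exp (θ * L / 2) := by
          rw [← Real.exp_add]; ring_nf
        rw [this]
        exact mul_le_mul_of_nonneg_right hefm (Real.exp_pos _).le
      nlinarith [hsum_sr, hsum_r, hfull2, (Real.exp_pos (θ * L / 2)).le]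
    -- conclude
    have hkey : 2 * θ * L ≤ Real.log (4 * m) + θ * L / 2 := by
      have h1 : Real.log S ≤ Real.log (4 * m * Real.exp (θ * L / 2)) :=
        Real.log_le_log hS0 hSup
      rw [Real.log_mul (by positivity) (Real.exp_ne_zero _), Real.log_exp] at h1
      rw [hθeq']
      exact h1
    have hlog4m : Real.log (4 * m) = Real.log 2 + L := by
      have : (4 * (m:ℝ)) = 2 * (2 * m) := by ring
      rw [this, Real.log_mul (by norm_num) (by positivity), hLdef]
    rw [hlog4m] at hkey
    have hgoal : (2/3) * (1 + Real.log 2 / L) = (2/3) * (L + Real.log 2) / L := by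
      field_simp
    rw [hgoal, le_div_iff₀ hL]
    nlinarith [hkey]
end

section
/- Let S_m denote the symmetric group on m letters. Then Θ(S_m) → 1/2 as m → ∞; that is, for every ε > 0 there exists M such that for all m ≥ M, 1/2 ≤ Θ(S_m) ≤ 1/2 + ε. -/
open MulAction in
lemma card_centralizer_bound {m : ℕ} (x : Equiv.Perm (Fin m)) (hx : x ≠ 1) :
    (m - 1) * Nat.card (Subgroup.centralizer ({x} : Set (Equiv.Perm (Fin m)))) ≤
      Fintype.card (Equiv.Perm (Fin m)) := by
  classical
  obtain ⟨a, ha⟩ : ∃ a, x a ≠ a := by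
    by_contra h
    push_neg at h
    exact hx (Equiv.ext h)
  have horb : ∀ c : Fin m, c ≠ a →
      (Equiv.swap (x a) c * x * Equiv.swap (x a) c) ∈ orbit (ConjAct (Equiv.Perm (Fin m))) x := by
    intro c _
    refine ⟨ConjAct.toConjAct (Equiv.swap (x a) c), ?_⟩
    simp only [ConjAct.toConjAct_smul]
    rw [Equiv.swap_inv]
  have happ : ∀ c : Fin m, c ≠ a → (Equiv.swap (x a) c * x * Equiv.swap (x a) c) a = c := by
    intro c hc
    have h1 : Equiv.swap (x a) c a = a :=
      Equiv.swap_apply_of_ne_of_ne (Ne.symm ha) (Ne.symm hc)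
    simp only [Equiv.Perm.mul_apply, h1]
    exact Equiv.swap_apply_left _ _
  have hcard : m - 1 ≤ Nat.card (orbit (ConjAct (Equiv.Perm (Fin m))) x) := by
    have h1 : ({a}ᶜ : Set (Fin m)).ncard ≤ (orbit (ConjAct (Equiv.Perm (Fin m))) x).ncard := by
      apply Set.ncard_le_ncard_of_injOn (fun c => Equiv.swap (x a) c * x * Equiv.swap (x a) c)
      · intro c hc; exact horb c hc
      · intro c hc c' hc' h
        have h2 := DFunLike.congr_fun h a
        rwa [happ c hc, happ c' hc'] at h2
    rw [Nat.card_coe_set_eq]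
    refine le_trans (le_of_eq ?_) h1
    rw [Set.ncard_eq_toFinset_card', Set.toFinset_compl, Set.toFinset_singleton,
      Finset.card_compl, Finset.card_singleton, Fintype.card_fin]
  have hos : Nat.card (orbit (ConjAct (Equiv.Perm (Fin m))) x)
      * Nat.card (stabilizer (ConjAct (Equiv.Perm (Fin m))) x)
      = Fintype.card (Equiv.Perm (Fin m)) := by
    simp only [Nat.card_eq_fintype_card]
    exact card_orbit_mul_card_stabilizer_eq_card_group (ConjAct (Equiv.Perm (Fin m))) x
  have hc : Nat.card (Subgroup.centralizer ({x} : Set (Equiv.Perm (Fin m)))) =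
      Nat.card (stabilizer (ConjAct (Equiv.Perm (Fin m))) x) := by
    exact Subgroup.nat_card_centralizer_nat_card_stabilizer x
  rw [hc, ← hos]
  exact Nat.mul_le_mul_right _ hcard


/-- `Θ(S_m) = 1/2 + o(1)` as `m → ∞`: for every `ε > 0` there is `M` such that for all
`m ≥ M`, `1/2 ≤ Θ(S_m) ≤ 1/2 + ε`. -/
theorem theta_symmetric_group (ε : ℝ) (hε : 0 < ε) :
    ∃ M : ℕ, ∀ m : ℕ, M ≤ m →
      ∀ θ : ℝ, θ ∈ Set.Icc (1/2 : ℝ) 1 → ThetaEqn (Equiv.Perm (Fin m)) θ →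
        1/2 ≤ θ ∧ θ ≤ 1/2 + ε := by
  classical
  refine ⟨⌈1/ε⌉₊ + 2, fun m hm θ hθ heq => ⟨hθ.1, ?_⟩⟩
  set n : ℕ := Fintype.card (Equiv.Perm (Fin m)) with hn
  set L : ℝ := Real.log n with hLdef
  have hm2 : 2 ≤ m := by omega
  have hmc : ((⌈1/ε⌉₊ : ℝ) + 2) ≤ (m : ℝ) := by exact_mod_cast hm
  have hmε : (1:ℝ) ≤ ε * ((m:ℝ) - 1) := by
    have h1 : (1/ε : ℝ) ≤ (⌈1/ε⌉₊ : ℝ) := Nat.le_ceil _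
    have h2 : (1/ε : ℝ) ≤ (m:ℝ) - 1 := by linarith
    rw [div_le_iff₀ hε] at h2
    nlinarith
  have hfact : n = m.factorial := by
    rw [hn, Fintype.card_perm, Fintype.card_fin]
  have hn2 : 2 ≤ n := by
    rw [hfact]
    calc 2 = Nat.factorial 2 := rfl
    _ ≤ m.factorial := Nat.factorial_le hm2
  have hn0 : (0:ℝ) < (n:ℝ) := by exact_mod_cast Nat.lt_of_lt_of_le (by norm_num) hn2
  have hL0 : 0 < L := Real.log_pos (by exact_mod_cast hn2)
  have hpow : 2 ^ (m-1) ≤ m.factorial := by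
    have h := Nat.factorial_mul_pow_le_factorial (m := 1) (n := m - 1)
    have h1 : 1 + (m - 1) = m := by omega
    simpa [Nat.factorial_one, h1] using h
  have hLlarge : ((m:ℝ) - 1) * Real.log 2 ≤ L := by
    have hcast : ((2:ℝ)) ^ (m-1) ≤ (m.factorial : ℝ) := by exact_mod_cast hpow
    have := Real.log_le_log (by positivity) hcast
    rw [Real.log_pow] at this
    rw [hLdef, hfact]
    have hm1 : ((m - 1 : ℕ) : ℝ) = (m:ℝ) - 1 := by
      push_cast [Nat.cast_sub (by omega : 1 ≤ m)]; ring
    rw [hm1] at this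
    exact this
  have hlog2 : (0:ℝ) ≤ Real.log 2 := Real.log_nonneg (by norm_num)
  have hεL : Real.log 2 ≤ ε * L := by nlinarith
  -- bound the sum
  set S : ℝ := ∑ x : Equiv.Perm (Fin m), Real.exp (θ * L *
      ((Nat.card (Subgroup.centralizer ({x} : Set (Equiv.Perm (Fin m)))) : ℝ) / (n : ℝ))) with hSdef
  have hSbound : S ≤ 2 * Real.exp ((1+ε)*L) := by
    rw [hSdef, ← Finset.add_sum_erase Finset.univ _ (Finset.mem_univ (1:Equiv.Perm (Fin m)))]
    have h1le : Real.exp (θ * L *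
        ((Nat.card (Subgroup.centralizer ({(1:Equiv.Perm (Fin m))} : Set (Equiv.Perm (Fin m)))) : ℝ) / (n : ℝ)))
        ≤ Real.exp ((1+ε)*L) := by
      apply Real.exp_le_exp.mpr
      have hc1 : (Nat.card (Subgroup.centralizer ({(1:Equiv.Perm (Fin m))} : Set (Equiv.Perm (Fin m)))) : ℝ) ≤ (n:ℝ) := by
        have h := Subgroup.card_le_card_group
          (Subgroup.centralizer ({(1:Equiv.Perm (Fin m))} : Set (Equiv.Perm (Fin m))))
        have h2 : Nat.card (Subgroup.centralizer
            ({(1:Equiv.Perm (Fin m))} : Set (Equiv.Perm (Fin m)))) ≤ n := by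
          rw [hn]
          exact le_trans h (le_of_eq Nat.card_eq_fintype_card)
        exact_mod_cast h2
      have hq0 : (0:ℝ) ≤ (Nat.card (Subgroup.centralizer ({(1:Equiv.Perm (Fin m))} : Set (Equiv.Perm (Fin m)))) : ℝ) / (n:ℝ) := by
        positivity
      have hq1 : (Nat.card (Subgroup.centralizer ({(1:Equiv.Perm (Fin m))} : Set (Equiv.Perm (Fin m)))) : ℝ) / (n:ℝ) ≤ 1 :=
        (div_le_one hn0).mpr hc1
      have hθ0 : (0:ℝ) ≤ θ := le_trans (by norm_num) hθ.1
      nlinarith [mul_le_mul_of_nonneg_left hq1 (mul_nonneg hθ0 hL0.le),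
        mul_le_mul_of_nonneg_right hθ.2 hL0.le, mul_nonneg hε.le hL0.le]
    have h2le : ∑ x ∈ Finset.univ.erase (1:Equiv.Perm (Fin m)), Real.exp (θ * L *
        ((Nat.card (Subgroup.centralizer ({x} : Set (Equiv.Perm (Fin m)))) : ℝ) / (n : ℝ)))
        ≤ Real.exp ((1+ε)*L) := by
      have hstep : ∑ x ∈ Finset.univ.erase (1:Equiv.Perm (Fin m)), Real.exp (θ * L *
          ((Nat.card (Subgroup.centralizer ({x} : Set (Equiv.Perm (Fin m)))) : ℝ) / (n : ℝ)))
          ≤ ∑ _x ∈ Finset.univ.erase (1:Equiv.Perm (Fin m)), Real.exp (ε * L) := by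
        apply Finset.sum_le_sum
        intro x hx
        have hx1 : x ≠ 1 := Finset.ne_of_mem_erase hx
        apply Real.exp_le_exp.mpr
        have hb := card_centralizer_bound x hx1
        rw [← hn] at hb
        have hbr : ((m:ℝ) - 1) * (Nat.card (Subgroup.centralizer ({x} : Set (Equiv.Perm (Fin m)))) : ℝ)
            ≤ (n:ℝ) := by
          have hcast : (((m-1) * Nat.card (Subgroup.centralizer ({x} : Set (Equiv.Perm (Fin m)))) : ℕ) : ℝ)
              ≤ ((n:ℕ) : ℝ) := by exact_mod_cast hb
          push_cast [Nat.cast_sub (by omega : 1 ≤ m)] at hcast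
          linarith
        have hcx0 : (0:ℝ) ≤ (Nat.card (Subgroup.centralizer ({x} : Set (Equiv.Perm (Fin m)))) : ℝ) :=
          Nat.cast_nonneg _
        have hcxε : (Nat.card (Subgroup.centralizer ({x} : Set (Equiv.Perm (Fin m)))) : ℝ) ≤ ε * n := by
          nlinarith
        have hq : (Nat.card (Subgroup.centralizer ({x} : Set (Equiv.Perm (Fin m)))) : ℝ) / (n:ℝ) ≤ ε :=
          (div_le_iff₀ hn0).mpr (by linarith)
        have hq0 : (0:ℝ) ≤ (Nat.card (Subgroup.centralizer ({x} : Set (Equiv.Perm (Fin m)))) : ℝ) / (n:ℝ) := by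
          positivity
        have hθ0 : (0:ℝ) ≤ θ := le_trans (by norm_num) hθ.1
        nlinarith [mul_le_mul_of_nonneg_left hq (mul_nonneg hθ0 hL0.le),
          mul_le_mul_of_nonneg_right hθ.2 (mul_nonneg hL0.le hε.le)]
      rw [Finset.sum_const, nsmul_eq_mul] at hstep
      have hcarderase : ((Finset.univ.erase (1:Equiv.Perm (Fin m))).card : ℝ) ≤ (n:ℝ) := by
        have := Finset.card_erase_le (a := (1:Equiv.Perm (Fin m))) (s := Finset.univ)
        have h2 : (Finset.univ.erase (1:Equiv.Perm (Fin m))).card ≤ n := le_trans this (by rw [hn]; rfl)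
        exact_mod_cast h2
      have hexp : (0:ℝ) < Real.exp (ε * L) := Real.exp_pos _
      have : ∑ _x ∈ Finset.univ.erase (1:Equiv.Perm (Fin m)), Real.exp (ε * L) ≤ (n:ℝ) * Real.exp (ε*L) := by
        rw [Finset.sum_const, nsmul_eq_mul]
        exact mul_le_mul_of_nonneg_right hcarderase hexp.le
      have hnexp : (n:ℝ) = Real.exp L := (Real.exp_log hn0).symm
      calc ∑ x ∈ Finset.univ.erase (1:Equiv.Perm (Fin m)), Real.exp (θ * L *
          ((Nat.card (Subgroup.centralizer ({x} : Set (Equiv.Perm (Fin m)))) : ℝ) / (n : ℝ)))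
          ≤ ∑ _x ∈ Finset.univ.erase (1:Equiv.Perm (Fin m)), Real.exp (ε * L) := by
            rw [Finset.sum_const, nsmul_eq_mul]; exact hstep
        _ ≤ (n:ℝ) * Real.exp (ε*L) := this
        _ = Real.exp ((1+ε)*L) := by rw [hnexp, ← Real.exp_add]; ring_nf
    linarith
  have hSpos : 0 < S := by
    rw [hSdef]
    exact Finset.sum_pos (fun x _ => Real.exp_pos _) ⟨1, Finset.mem_univ 1⟩
  have heq' : 2 * θ * L = Real.log S := by
    unfold ThetaEqn at heq
    exact heq
  have hlogle : Real.log S ≤ Real.log (2 * Real.exp ((1+ε)*L)) :=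
    Real.log_le_log hSpos hSbound
  rw [Real.log_mul (by norm_num) (Real.exp_ne_zero _), Real.log_exp] at hlogle
  have hfin : 2 * θ * L ≤ (1 + 2*ε) * L := by
    rw [heq']
    calc Real.log S ≤ Real.log 2 + (1+ε)*L := hlogle
      _ ≤ ε * L + (1+ε)*L := by linarith
      _ = (1 + 2*ε) * L := by ring
  nlinarith
end

section
/- Let 1/2 ≤ α < 1. For each integer m ≥ 2, set n_m = m!, k_m = ⌊n_m^{α/(1−α)}⌋, and let G_m = C_{k_m} × S_m be the direct product of the cyclic group of order k_m with the symmetric group on m letters. Then Θ(G_m) → α as m → ∞. In particular, for every α ∈ [1/2, 1) there exists a sequence of finite groups G_m with |G_m| → ∞ and lim_{m→∞} Θ(G_m) = α. -/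
open Equiv

lemma exists_perm_two (m : ℕ) (a b c d : Fin m) (hab : a ≠ b) (hcd : c ≠ d) :
    ∃ g : Equiv.Perm (Fin m), g a = c ∧ g b = d := by
  refine ⟨Equiv.swap ((Equiv.swap a c) b) d * Equiv.swap a c, ?_, ?_⟩
  · simp only [Equiv.Perm.mul_apply, Equiv.swap_apply_left]
    rw [Equiv.swap_apply_of_ne_of_ne]
    · intro h
      have := congrArg (Equiv.swap a c) h
      simp only [Equiv.swap_apply_self, Equiv.swap_apply_right] at this
      exact hab this
    · exact hcd
  · simp only [Equiv.Perm.mul_apply]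
    rw [Equiv.swap_apply_left]

lemma fixer_card_le (m : ℕ) (a b : Fin m) (hab : a ≠ b) :
    Nat.card {π : Equiv.Perm (Fin m) // π a = a ∧ π b = b} ≤ (m - 2).factorial := by
  have hcard : Fintype.card {x : Fin m // x ≠ a ∧ x ≠ b} = m - 2 := by
    rw [Fintype.card_subtype]
    rw [show (Finset.univ.filter fun x => x ≠ a ∧ x ≠ b) = Finset.univ \ {a, b} from by
      ext x; simp [not_or]]
    rw [Finset.card_sdiff_of_subset (Finset.subset_univ _)]
    simp [Finset.card_insert_of_notMem, hab]
  have hinj : Function.Injective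
      (fun π : {π : Equiv.Perm (Fin m) // π a = a ∧ π b = b} =>
        (π : Equiv.Perm (Fin m)).subtypePerm (p := fun x => x ≠ a ∧ x ≠ b) (by
          intro x
          constructor
          · rintro ⟨h1, h2⟩
            refine ⟨fun h => h1 ?_, fun h => h2 ?_⟩
            · rw [h, π.2.1]
            · rw [h, π.2.2]
          · rintro ⟨h1, h2⟩
            refine ⟨fun h => h1 ?_, fun h => h2 ?_⟩
            · have := π.2.1
              exact (π : Equiv.Perm (Fin m)).injective (by rw [h, this])
            · have := π.2.2
              exact (π : Equiv.Perm (Fin m)).injective (by rw [h, this]))) := by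
    intro π₁ π₂ h
    ext x
    by_cases hx1 : x = a
    · rw [hx1, π₁.2.1, π₂.2.1]
    by_cases hx2 : x = b
    · rw [hx2, π₁.2.2, π₂.2.2]
    · have h0 := congrArg (fun e => e ⟨x, hx1, hx2⟩) h
      have h2 := congrArg Subtype.val h0
      have h3 : (π₁ : Equiv.Perm (Fin m)) x = (π₂ : Equiv.Perm (Fin m)) x := by
        simpa [Equiv.Perm.subtypePerm] using h2
      exact congrArg Fin.val h3
  calc Nat.card {π : Equiv.Perm (Fin m) // π a = a ∧ π b = b}
      ≤ Nat.card (Equiv.Perm {x : Fin m // x ≠ a ∧ x ≠ b}) :=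
        Nat.card_le_card_of_injective _ hinj
    _ = (m - 2).factorial := by
        rw [Nat.card_eq_fintype_card, Fintype.card_perm, hcard]

lemma centralizer_mul_le (m : ℕ) (hm : 2 ≤ m) (σ : Equiv.Perm (Fin m)) (hσ : σ ≠ 1) :
    Nat.card (Subgroup.centralizer ({σ} : Set (Equiv.Perm (Fin m)))) * (m - 1)
      ≤ m.factorial := by
  obtain ⟨a, ha⟩ : ∃ a, σ a ≠ a := by
    by_contra h
    push_neg at h
    exact hσ (Equiv.ext fun x => by simp [h x])
  set b := σ a with hb
  have hab : a ≠ b := fun h => ha h.symm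
  classical
  let gg : Fin m → Equiv.Perm (Fin m) := fun c =>
    if h : c ≠ σ c then (exists_perm_two m a b c (σ c) hab h).choose else 1
  have hgg : ∀ c, c ≠ σ c → gg c a = c ∧ gg c b = σ c := by
    intro c h
    simp only [gg, dif_pos h]
    exact (exists_perm_two m a b c (σ c) hab h).choose_spec
  -- the injection
  have key : ∀ τ : Equiv.Perm (Fin m), τ ∈ Subgroup.centralizer ({σ} : Set _) →
      τ b = σ (τ a) ∧ τ a ≠ σ (τ a) := by
    intro τ hτ
    have hc := Subgroup.mem_centralizer_iff.mp hτ σ rfl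
    have h1 : τ b = σ (τ a) := by
      have := congrArg (fun e => e a) hc
      simpa [Equiv.Perm.mul_apply] using this.symm
    refine ⟨h1, ?_⟩
    rw [← h1]
    exact fun h => hab (τ.injective h)
  have hinj : Function.Injective
      (fun τ : Subgroup.centralizer ({σ} : Set (Equiv.Perm (Fin m))) =>
        ((((τ : Equiv.Perm (Fin m)) a, ⟨(gg ((τ : Equiv.Perm (Fin m)) a))⁻¹ * τ, by
          obtain ⟨h1, h2⟩ := key τ τ.2
          obtain ⟨hg1, hg2⟩ := hgg ((τ : Equiv.Perm (Fin m)) a) h2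
          constructor
          · simp only [Equiv.Perm.mul_apply]
            exact (Equiv.Perm.inv_eq_iff_eq).mpr hg1.symm
          · simp only [Equiv.Perm.mul_apply]
            rw [h1]
            exact (Equiv.Perm.inv_eq_iff_eq).mpr hg2.symm⟩) :
          Fin m × {π : Equiv.Perm (Fin m) // π a = a ∧ π b = b}))) := by
    intro τ₁ τ₂ h
    have h1 : (τ₁ : Equiv.Perm (Fin m)) a = (τ₂ : Equiv.Perm (Fin m)) a :=
      congrArg Prod.fst h
    have h2 := congrArg (fun p => (p.2 : Equiv.Perm (Fin m))) h
    simp only at h2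
    rw [h1] at h2
    exact Subtype.ext (mul_left_cancel h2)
  have hle : Nat.card (Subgroup.centralizer ({σ} : Set (Equiv.Perm (Fin m))))
      ≤ m * (m - 2).factorial := by
    calc Nat.card (Subgroup.centralizer ({σ} : Set (Equiv.Perm (Fin m))))
        ≤ Nat.card (Fin m × {π : Equiv.Perm (Fin m) // π a = a ∧ π b = b}) :=
          Nat.card_le_card_of_injective _ hinj
      _ = m * Nat.card {π : Equiv.Perm (Fin m) // π a = a ∧ π b = b} := by
          rw [Nat.card_prod, Nat.card_eq_fintype_card, Fintype.card_fin]
      _ ≤ m * (m - 2).factorial :=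
          Nat.mul_le_mul_left m (fixer_card_le m a b hab)
  obtain ⟨n, rfl⟩ : ∃ n, m = n + 2 := ⟨m - 2, by omega⟩
  calc Nat.card (Subgroup.centralizer ({σ} : Set (Equiv.Perm (Fin (n + 2))))) * (n + 2 - 1)
      ≤ (n + 2) * n.factorial * (n + 1) := by
        have := Nat.mul_le_mul_right (n + 2 - 1) hle
        simpa using this
    _ = (n + 2).factorial := by
        rw [Nat.factorial_succ, Nat.factorial_succ]
        ring

lemma card_centralizer_prod {A B : Type*} [CommGroup A] [Group B] (a : A) (b : B) :
    Nat.card (Subgroup.centralizer ({(a, b)} : Set (A × B)))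
      = Nat.card A * Nat.card (Subgroup.centralizer ({b} : Set B)) := by
  have h : Subgroup.centralizer ({(a, b)} : Set (A × B)) =
      (⊤ : Subgroup A).prod (Subgroup.centralizer {b}) := by
    ext ⟨x, y⟩
    simp [Subgroup.mem_centralizer_iff, Subgroup.mem_prod, Prod.ext_iff, mul_comm]
  rw [h, Nat.card_congr (Subgroup.prodEquiv _ _).toEquiv, Nat.card_prod, Subgroup.card_top]

lemma centralizer_one_eq_top (P : Type*) [Group P] :
    Subgroup.centralizer ({(1 : P)} : Set P) = ⊤ := by
  ext x; simp [Subgroup.mem_centralizer_iff]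

set_option maxHeartbeats 1000000 in
/-- Let `1/2 ≤ α < 1`.  For `m ≥ 2` set `n_m = m!`, `k_m = ⌊n_m^{α/(1−α)}⌋` and
`G_m = C_{k_m} × S_m`.  Then `Θ(G_m) → α` as `m → ∞`: for every `ε > 0` there is `M`
such that `|Θ(G_m) − α| ≤ ε` for all `m ≥ M`. -/
theorem theta_cyclic_times_symmetric (α : ℝ) (hα : 1/2 ≤ α) (hα1 : α < 1)
    (ε : ℝ) (hε : 0 < ε) :
    ∃ M : ℕ, ∀ m : ℕ, M ≤ m → 2 ≤ m →
      ∀ [NeZero (⌊((m.factorial : ℝ)) ^ (α / (1 - α))⌋₊)],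
      ∀ θ : ℝ, θ ∈ Set.Icc (1/2 : ℝ) 1 →
        ThetaEqn (Multiplicative (ZMod (⌊((m.factorial : ℝ)) ^ (α / (1 - α))⌋₊)) × Equiv.Perm (Fin m)) θ →
        |θ - α| ≤ ε := by
  have h1α : 0 < 1 - α := by linarith
  set ε' := min ε 1 with hε'def
  have hε'pos : 0 < ε' := lt_min hε one_pos
  have hε'le : ε' ≤ ε := min_le_left _ _
  have hε'1 : ε' ≤ 1 := min_le_right _ _
  set c := α / (1 - α) with hcdef
  have hc1 : 1 ≤ c := by
    rw [hcdef, le_div_iff₀ h1α]; linarith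
  have hαc : α * (c + 1) = c := by
    rw [hcdef]; field_simp; ring
  refine ⟨⌈Real.exp (3 / ε')⌉₊ + ⌈2 / ε'⌉₊ + 3, ?_⟩
  intro m hM hm2 inst θ hθ hEq
  obtain ⟨hθ2, hθ1⟩ := hθ
  have hθ0 : (0:ℝ) < θ := by linarith
  set k := ⌊((m.factorial : ℝ)) ^ c⌋₊ with hkdef
  -- basic facts about m!
  have hfac2 : (2:ℕ) ≤ m.factorial := by
    calc (2:ℕ) = Nat.factorial 2 := rfl
      _ ≤ m.factorial := Nat.factorial_le hm2
  have hfacR : (2:ℝ) ≤ (m.factorial : ℝ) := by exact_mod_cast hfac2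
  have hfacpos : (0:ℝ) < (m.factorial : ℝ) := by linarith
  set B := Real.log (m.factorial : ℝ) with hBdef
  have hB3 : 3 / ε' ≤ B := by
    have h1 : Real.exp (3/ε') ≤ (m:ℝ) := by
      have hm' : (⌈Real.exp (3/ε')⌉₊ : ℝ) ≤ (m:ℝ) := by
        exact_mod_cast le_trans (by omega) hM
      exact le_trans (Nat.le_ceil _) hm'
    have h2 : (m:ℝ) ≤ (m.factorial : ℝ) := by exact_mod_cast Nat.self_le_factorial m
    rw [hBdef, Real.le_log_iff_exp_le hfacpos]; linarith
  have h3B : (3:ℝ) ≤ 3 / ε' := by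
    rw [le_div_iff₀ hε'pos]; linarith only [hε'1, hε'pos]
  have hB1 : (1:ℝ) ≤ B := by linarith
  have hBpos : (0:ℝ) < B := by linarith
  have h3εB : 3 ≤ ε' * B := by
    rw [div_le_iff₀ hε'pos] at hB3; linarith
  -- m bound
  have hmR : 2/ε' ≤ (m:ℝ) - 1 := by
    have hm' : (⌈2/ε'⌉₊ : ℝ) + 1 ≤ (m:ℝ) := by
      have : ⌈2/ε'⌉₊ + 1 ≤ m := by omega
      exact_mod_cast this
    have := Nat.le_ceil (2/ε')
    linarith
  have hm1pos : (0:ℝ) < (m:ℝ) - 1 := lt_of_lt_of_le (by positivity) hmR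
  set δ := 1/((m:ℝ)-1) with hδdef
  have hδpos : 0 < δ := by positivity
  have hδ : δ ≤ ε'/2 := by
    rw [hδdef, div_le_div_iff₀ hm1pos (by norm_num)]
    rw [div_le_iff₀ hε'pos] at hmR
    linarith only [hmR]
  -- bounds on k
  have hxge : (m.factorial:ℝ) ≤ (m.factorial:ℝ) ^ c := by
    calc (m.factorial:ℝ) = (m.factorial:ℝ) ^ (1:ℝ) := (Real.rpow_one _).symm
      _ ≤ (m.factorial:ℝ) ^ c := Real.rpow_le_rpow_of_exponent_le (by linarith) hc1
  have hx2 : (2:ℝ) ≤ (m.factorial:ℝ)^c := le_trans hfacR hxge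
  have hKle : (k:ℝ) ≤ (m.factorial:ℝ)^c := Nat.floor_le (by positivity)
  have hKge : (m.factorial:ℝ)^c - 1 ≤ (k:ℝ) := (Nat.sub_one_lt_floor _).le
  have hK1 : (1:ℝ) ≤ (k:ℝ) := by linarith
  have hKpos : (0:ℝ) < (k:ℝ) := by linarith
  have hlogK_le : Real.log (k:ℝ) ≤ c * B := by
    calc Real.log (k:ℝ) ≤ Real.log ((m.factorial:ℝ)^c) := Real.log_le_log hKpos hKle
      _ = c * B := Real.log_rpow hfacpos c
  have hlogK_ge : c * B - 1 ≤ Real.log (k:ℝ) := by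
    have h2 : (m.factorial:ℝ)^c / 2 ≤ (k:ℝ) := by linarith
    have hlog2 : Real.log 2 ≤ 1 := by
      have := Real.log_le_sub_one_of_pos (by norm_num : (0:ℝ) < 2); linarith
    calc c*B - 1 ≤ c*B - Real.log 2 := by linarith
      _ = Real.log ((m.factorial:ℝ)^c / 2) := by
          rw [Real.log_div (by positivity) (by norm_num), Real.log_rpow hfacpos]
      _ ≤ Real.log (k:ℝ) := Real.log_le_log (by positivity) h2
  have hlogK0 : 0 ≤ Real.log (k:ℝ) := Real.log_nonneg hK1
  -- card of the group
  have hcard : Fintype.card (Multiplicative (ZMod k) × Equiv.Perm (Fin m))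
      = k * m.factorial := by
    rw [Fintype.card_prod, Fintype.card_multiplicative, ZMod.card, Fintype.card_perm,
      Fintype.card_fin]
  set L := Real.log (k:ℝ) + B with hLdef
  have hNL : Real.log ((Fintype.card (Multiplicative (ZMod k) × Equiv.Perm (Fin m)) : ℕ) : ℝ)
      = L := by
    rw [hcard]
    push_cast
    rw [Real.log_mul (ne_of_gt hKpos) (ne_of_gt hfacpos)]
  have hLB : B ≤ L := by rw [hLdef]; linarith
  have hLpos : 0 < L := lt_of_lt_of_le hBpos hLB
  have hcB : (c+1)*B = c*B + B := by ring
  have hLleB : L ≤ (c+1)*B := by rw [hLdef]; linarith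
  have hLgeB : (c+1)*B - 1 ≤ L := by rw [hLdef]; linarith
  clear_value ε' c B δ L
  -- massage the equation
  rw [ThetaEqn, hNL] at hEq
  set W := ∑ σ : Equiv.Perm (Fin m),
      Real.exp (θ * L * ((Nat.card (Subgroup.centralizer ({σ} : Set (Equiv.Perm (Fin m)))) : ℝ)
        / (m.factorial : ℝ))) with hWdef
  have hsum : (∑ x : Multiplicative (ZMod k) × Equiv.Perm (Fin m),
      Real.exp (θ * L * ((Nat.card (Subgroup.centralizer ({x} : Set (Multiplicative (ZMod k) × Equiv.Perm (Fin m)))) : ℝ)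
        / ((Fintype.card (Multiplicative (ZMod k) × Equiv.Perm (Fin m)) : ℕ) : ℝ))))
      = (k:ℝ) * W := by
    rw [Fintype.sum_prod_type]
    have hinner : ∀ a : Multiplicative (ZMod k), ∀ σ : Equiv.Perm (Fin m),
        Real.exp (θ * L * ((Nat.card (Subgroup.centralizer ({(a,σ)} : Set (Multiplicative (ZMod k) × Equiv.Perm (Fin m)))) : ℝ)
          / ((Fintype.card (Multiplicative (ZMod k) × Equiv.Perm (Fin m)) : ℕ) : ℝ)))
        = Real.exp (θ * L * ((Nat.card (Subgroup.centralizer ({σ} : Set (Equiv.Perm (Fin m)))) : ℝ)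
          / (m.factorial : ℝ))) := by
      intro a σ
      congr 1
      rw [card_centralizer_prod, hcard]
      have hzk : Nat.card (Multiplicative (ZMod k)) = k := by
        rw [Nat.card_eq_fintype_card, Fintype.card_multiplicative, ZMod.card]
      rw [hzk]
      push_cast
      rw [mul_div_mul_left _ _ (ne_of_gt hKpos)]
    calc (∑ a : Multiplicative (ZMod k), ∑ σ : Equiv.Perm (Fin m),
        Real.exp (θ * L * ((Nat.card (Subgroup.centralizer ({(a,σ)} : Set (Multiplicative (ZMod k) × Equiv.Perm (Fin m)))) : ℝ)
          / ((Fintype.card (Multiplicative (ZMod k) × Equiv.Perm (Fin m)) : ℕ) : ℝ))))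
        = ∑ _a : Multiplicative (ZMod k), W := by
          apply Finset.sum_congr rfl
          intro a _
          rw [hWdef]
          exact Finset.sum_congr rfl fun σ _ => hinner a σ
      _ = (k:ℝ) * W := by
          rw [Finset.sum_const, Finset.card_univ, Fintype.card_multiplicative, ZMod.card,
            nsmul_eq_mul]
  rw [hsum] at hEq
  -- positivity of W
  have hWpos : 0 < W := by
    rw [hWdef]
    exact Finset.sum_pos (fun i _ => Real.exp_pos _) Finset.univ_nonempty
  have hexp : Real.exp (2*θ*L) = (k:ℝ) * W := by
    rw [hEq]; exact Real.exp_log (mul_pos hKpos hWpos)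
  -- lower bound on W
  have hone : Real.exp (θ * L * ((Nat.card (Subgroup.centralizer ({(1 : Equiv.Perm (Fin m))} : Set (Equiv.Perm (Fin m)))) : ℝ)
      / (m.factorial : ℝ))) = Real.exp (θ*L) := by
    rw [centralizer_one_eq_top, Subgroup.card_top, Nat.card_eq_fintype_card, Fintype.card_perm,
      Fintype.card_fin, div_self (ne_of_gt hfacpos), mul_one]
  have hWge : Real.exp (θ*L) ≤ W := by
    rw [← hone, hWdef]
    exact Finset.single_le_sum
      (f := fun σ : Equiv.Perm (Fin m) => Real.exp (θ * L *
        ((Nat.card (Subgroup.centralizer ({σ} : Set (Equiv.Perm (Fin m)))) : ℝ)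
          / (m.factorial : ℝ))))
      (fun i _ => (Real.exp_pos _).le) (Finset.mem_univ (1 : Equiv.Perm (Fin m)))
  -- upper bound on W
  have hterm : ∀ σ : Equiv.Perm (Fin m), σ ≠ 1 →
      Real.exp (θ * L * ((Nat.card (Subgroup.centralizer ({σ} : Set (Equiv.Perm (Fin m)))) : ℝ)
        / (m.factorial : ℝ))) ≤ Real.exp (θ*L*δ) := by
    intro σ hσ
    apply Real.exp_le_exp.mpr
    apply mul_le_mul_of_nonneg_left _ (by positivity : (0:ℝ) ≤ θ*L)
    have hcm := centralizer_mul_le m hm2 σ hσ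
    have hcast : ((Nat.card (Subgroup.centralizer ({σ} : Set (Equiv.Perm (Fin m)))) : ℝ)) * ((m:ℝ) - 1)
        ≤ (m.factorial : ℝ) := by
      have h' : ((Nat.card (Subgroup.centralizer ({σ} : Set (Equiv.Perm (Fin m)))) * (m-1) : ℕ) : ℝ)
          ≤ (m.factorial : ℝ) := Nat.cast_le.mpr hcm
      rw [Nat.cast_mul, Nat.cast_sub (by omega : 1 ≤ m)] at h'
      exact_mod_cast h'
    rw [hδdef, div_le_div_iff₀ hfacpos hm1pos]
    linarith
  have hWle : W ≤ Real.exp (θ*L) + (m.factorial:ℝ) * Real.exp (θ*L*δ) := by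
    classical
    have hsplit := Finset.add_sum_erase Finset.univ
      (fun σ : Equiv.Perm (Fin m) =>
        Real.exp (θ * L * ((Nat.card (Subgroup.centralizer ({σ} : Set (Equiv.Perm (Fin m)))) : ℝ)
          / (m.factorial : ℝ)))) (Finset.mem_univ (1 : Equiv.Perm (Fin m)))
    rw [hWdef, ← hsplit, hone]
    have hrest : (∑ σ ∈ Finset.univ.erase (1 : Equiv.Perm (Fin m)),
        Real.exp (θ * L * ((Nat.card (Subgroup.centralizer ({σ} : Set (Equiv.Perm (Fin m)))) : ℝ)
          / (m.factorial : ℝ)))) ≤ (m.factorial:ℝ) * Real.exp (θ*L*δ) := by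
      calc (∑ σ ∈ Finset.univ.erase (1 : Equiv.Perm (Fin m)),
          Real.exp (θ * L * ((Nat.card (Subgroup.centralizer ({σ} : Set (Equiv.Perm (Fin m)))) : ℝ)
            / (m.factorial : ℝ))))
          ≤ (Finset.univ.erase (1 : Equiv.Perm (Fin m))).card • Real.exp (θ*L*δ) := by
            apply Finset.sum_le_card_nsmul
            intro σ hσ
            exact hterm σ (Finset.ne_of_mem_erase hσ)
        _ ≤ (m.factorial:ℝ) * Real.exp (θ*L*δ) := by
            rw [nsmul_eq_mul]
            apply mul_le_mul_of_nonneg_right _ (Real.exp_pos _).le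
            have h1 : (Finset.univ.erase (1 : Equiv.Perm (Fin m))).card ≤ m.factorial := by
              calc (Finset.univ.erase (1 : Equiv.Perm (Fin m))).card
                  ≤ (Finset.univ : Finset (Equiv.Perm (Fin m))).card :=
                    Finset.card_le_card (Finset.erase_subset _ _)
                _ = m.factorial := by rw [Finset.card_univ, Fintype.card_perm, Fintype.card_fin]
            exact_mod_cast h1
    linarith
  -- lower bound on θ
  have hlow : Real.log (k:ℝ) + θ*L ≤ 2*θ*L := by
    have h1 : (k:ℝ)*Real.exp (θ*L) ≤ Real.exp (2*θ*L) := by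
      rw [hexp]
      exact mul_le_mul_of_nonneg_left hWge hKpos.le
    have h2 := Real.log_le_log (by positivity) h1
    rwa [Real.log_mul (ne_of_gt hKpos) (Real.exp_ne_zero _), Real.log_exp, Real.log_exp] at h2
  have hαcB : α*((c+1)*B) = c*B := by rw [← mul_assoc, hαc]
  have hθlow : α - ε ≤ θ := by
    have h1 : c*B - 1 ≤ θ*L := by linarith only [hlow, hlogK_ge]
    have h2 : θ*L ≤ θ*((c+1)*B) := mul_le_mul_of_nonneg_left hLleB hθ0.le
    by_cases hcase : α ≤ θ
    · linarith only [hcase, hε]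
    · push_neg at hcase
      have hcc : 2*B ≤ (c+1)*B := by
        have h0 : 1*B ≤ c*B := mul_le_mul_of_nonneg_right hc1 hBpos.le
        linarith only [h0]
      have h4 : (α - θ)*(2*B) ≤ (α - θ)*((c+1)*B) :=
        mul_le_mul_of_nonneg_left hcc (by linarith only [hcase])
      have h5 : (α - θ)*(2*B) ≤ 1 := by
        have e : (α - θ)*((c+1)*B) = α*((c+1)*B) - θ*((c+1)*B) := by ring
        linarith only [h4, e, hαcB, h1, h2]
      have h6 : ((α-θ)*6)*B ≤ ε'*B := by linarith only [h5, h3εB]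
      have h7 : (α-θ)*6 ≤ ε' := le_of_mul_le_mul_right h6 hBpos
      linarith only [h7, hε'le, hcase, hε'pos]
  -- upper bound on θ
  have hθhigh : θ - α ≤ ε := by
    have hup : Real.exp (2*θ*L) ≤ (k:ℝ)*Real.exp (θ*L) + (k:ℝ)*(m.factorial:ℝ)*Real.exp (θ*L*δ) := by
      rw [hexp]
      calc (k:ℝ) * W ≤ (k:ℝ) * (Real.exp (θ*L) + (m.factorial:ℝ) * Real.exp (θ*L*δ)) :=
            mul_le_mul_of_nonneg_left hWle hKpos.le
        _ = (k:ℝ)*Real.exp (θ*L) + (k:ℝ)*(m.factorial:ℝ)*Real.exp (θ*L*δ) := by ring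
    have hlog2 : Real.log 2 ≤ 1 := by
      have := Real.log_le_sub_one_of_pos (by norm_num : (0:ℝ) < 2); linarith only [this]
    rcases le_total ((k:ℝ)*Real.exp (θ*L)) ((k:ℝ)*(m.factorial:ℝ)*Real.exp (θ*L*δ)) with hco | hco
    · -- dominated by the bulk term
      have h1 : Real.exp (2*θ*L) ≤ 2*((k:ℝ)*(m.factorial:ℝ)*Real.exp (θ*L*δ)) := by
        linarith only [hup, hco]
      have h2 := Real.log_le_log (Real.exp_pos _) h1
      rw [Real.log_exp] at h2
      have h3 : Real.log (2*((k:ℝ)*(m.factorial:ℝ)*Real.exp (θ*L*δ)))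
          = Real.log 2 + (Real.log (k:ℝ) + B + θ*L*δ) := by
        rw [Real.log_mul (by norm_num) (by positivity),
          Real.log_mul (by positivity) (Real.exp_ne_zero _),
          Real.log_mul (ne_of_gt hKpos) (ne_of_gt hfacpos), Real.log_exp, hBdef]
        try ring
      rw [h3] at h2
      have h4 : 2*θ*L ≤ 1 + L + θ*L*δ := by
        rw [hLdef] at h2 ⊢
        linarith only [h2, hlog2]
      have hLB' : 1 ≤ L/B := (one_le_div hBpos).mpr hLB
      have h5 : θ*(2-δ)*L ≤ (1 + 1/B)*L := by
        have e : (1 + 1/B)*L = L + L/B := by ring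
        rw [e]
        linarith only [h4, hLB']
      have h6 : θ*(2-δ) ≤ 1 + 1/B := le_of_mul_le_mul_right h5 hLpos
      have h7 : 1/B ≤ ε'/3 := by
        rw [div_le_div_iff₀ hBpos (by norm_num)]
        linarith only [h3εB]
      have h8 : θ*δ ≤ ε'/2 := by
        have := mul_le_mul_of_nonneg_right hθ1 hδpos.le
        rw [one_mul] at this
        linarith only [this, hδ]
      have h9 : θ ≤ 1/2 + ε' := by
        have e : θ*(2-δ) = 2*θ - θ*δ := by ring
        linarith only [h6, h7, h8, e, hε'pos]
      linarith only [h9, hα, hε'le]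
    · -- dominated by the identity term
      have h1 : Real.exp (2*θ*L) ≤ 2*((k:ℝ)*Real.exp (θ*L)) := by
        linarith only [hup, hco]
      have h2 := Real.log_le_log (Real.exp_pos _) h1
      rw [Real.log_exp] at h2
      have h3 : Real.log (2*((k:ℝ)*Real.exp (θ*L))) = Real.log 2 + Real.log (k:ℝ) + θ*L := by
        rw [Real.log_mul (by norm_num) (by positivity),
          Real.log_mul (ne_of_gt hKpos) (Real.exp_ne_zero _), Real.log_exp]
        ring
      rw [h3] at h2
      have h4 : θ*L ≤ 1 + c*B := by linarith only [h2, hlog2, hlogK_le]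
      have h5 : θ*((c+1)*B - 1) ≤ θ*L := mul_le_mul_of_nonneg_left hLgeB hθ0.le
      by_cases hcase : θ ≤ α
      · linarith only [hcase, hε]
      · push_neg at hcase
        have h6 : (θ-α)*((c+1)*B - 1) ≤ 2 := by
          have e1 : (θ-α)*((c+1)*B - 1) = θ*((c+1)*B - 1) - α*((c+1)*B) + α := by ring
          linarith only [e1, h5, h4, hαcB, hα1]
        have hcB1 : 1 ≤ c*B := by
          have h0 : 1*B ≤ c*B := mul_le_mul_of_nonneg_right hc1 hBpos.le
          linarith only [h0, hB1]
        have h7 : B ≤ (c+1)*B - 1 := by linarith only [hcB1]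
        have h8 : (θ-α)*B ≤ (θ-α)*((c+1)*B - 1) :=
          mul_le_mul_of_nonneg_left h7 (by linarith only [hcase])
        have h9 : ((θ-α)*3)*B ≤ (2*ε')*B := by linarith only [h8, h6, h3εB]
        have h10 : (θ-α)*3 ≤ 2*ε' := le_of_mul_le_mul_right h9 hBpos
        linarith only [h10, hε'le, hε'pos]
  rw [abs_le]
  constructor <;> linarith only [hθlow, hθhigh]
end

section
/- For every ε > 0 there exists N such that every finite simple non-abelian group G with |G| ≥ N satisfies Θ(G) ≤ 1/2 + ε. That is, Θ(G) = 1/2 + o(1) as |G| → ∞ over finite simple non-abelian groups. -/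
section aux

variable {G : Type} [Group G] [Fintype G]

lemma card_dvd_factorial_index [IsSimpleGroup G] {H : Subgroup G} (hH : H ≠ ⊤) :
    Fintype.card G ∣ Nat.factorial H.index := by
  have hcore : H.normalCore = ⊥ := by
    rcases (Subgroup.normalCore_normal H).eq_bot_or_eq_top with h | h
    · exact h
    · exact absurd (top_le_iff.mp (h ▸ H.normalCore_le)) hH
  have hker : (MulAction.toPermHom G (G ⧸ H)).ker = ⊥ := by
    rw [← Subgroup.normalCore_eq_ker, hcore]
  have hinj : Function.Injective (MulAction.toPermHom G (G ⧸ H)) :=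
    (MonoidHom.ker_eq_bot_iff _).mp hker
  have hd := Subgroup.card_dvd_of_injective _ hinj
  have : Fintype (G ⧸ H) := Fintype.ofFinite _
  have : DecidableEq (G ⧸ H) := Classical.decEq _
  have hp : Nat.card (Equiv.Perm (G ⧸ H)) = Nat.factorial (Nat.card (G ⧸ H)) := by
    rw [Nat.card_eq_fintype_card, Nat.card_eq_fintype_card, Fintype.card_perm]
  rwa [Nat.card_eq_fintype_card (α := G), hp, ← Subgroup.index_eq_card] at hd

omit [Fintype G] in
lemma centralizer_ne_top [IsSimpleGroup G] (hnab : ¬ ∀ a b : G, a * b = b * a)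
    {x : G} (hx : x ≠ 1) : Subgroup.centralizer ({x} : Set G) ≠ ⊤ := by
  intro h
  have hx_center : x ∈ Subgroup.center G := by
    have := (Subgroup.centralizer_eq_top_iff_subset).mp h
    exact this rfl
  rcases (Subgroup.center G).normal_of_characteristic.eq_bot_or_eq_top with hc | hc
  · exact hx (by simpa [hc] using hx_center)
  · apply hnab
    intro a b
    have ha : a ∈ Subgroup.center G := hc ▸ Subgroup.mem_top a
    exact (Subgroup.mem_center_iff.mp ha b).symm

end aux

/-- `Θ(G) = 1/2 + o(1)` over finite simple non-abelian groups: for every `ε > 0` there is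
`N` such that every finite simple non-abelian group `G` with `|G| ≥ N` satisfies
`Θ(G) ≤ 1/2 + ε`. -/
theorem theta_simple_group (ε : ℝ) (hε : 0 < ε) :
    ∃ N : ℕ, ∀ (G : Type) [Group G] [Fintype G], IsSimpleGroup G →
      (¬ ∀ a b : G, a * b = b * a) → N ≤ Fintype.card G →
      ∀ θ : ℝ, θ ∈ Set.Icc (1/2 : ℝ) 1 → ThetaEqn G θ →
        θ ≤ 1/2 + ε := by
  classical
  set m : ℕ := ⌈1/ε⌉₊ + 1 with hm
  have hmε : 1 ≤ ε * m := by
    have h1 : (1/ε : ℝ) ≤ m := by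
      have := Nat.le_ceil (1/ε)
      push_cast [hm]
      linarith
    calc (1:ℝ) = ε * (1/ε) := by field_simp
    _ ≤ ε * m := by
      apply mul_le_mul_of_nonneg_left h1 hε.le
  refine ⟨max (Nat.factorial m + 1) (2 ^ m), ?_⟩
  intro G _ _ hsimple hnab hN θ hθ heq
  set n : ℕ := Fintype.card G with hn
  have hn2m : 2 ^ m ≤ n := le_trans (le_max_right _ _) hN
  have hnfac : Nat.factorial m < n := lt_of_lt_of_le (Nat.lt_succ_self _) (le_trans (le_max_left _ _) hN)
  have hm0 : m ≠ 0 := by omega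
  have hn2 : (2:ℕ) ≤ n := le_trans (Nat.le_self_pow hm0 2) hn2m
  have hnpos : (0:ℝ) < n := by positivity
  set L : ℝ := Real.log n with hL
  have hLpos : 0 < L := Real.log_pos (by exact_mod_cast hn2)
  have hlog2 : Real.log 2 ≤ ε * L := by
    have h2m : Real.log (2 ^ m : ℕ) ≤ L := Real.log_le_log (by positivity) (by exact_mod_cast hn2m)
    have : (m : ℝ) * Real.log 2 ≤ L := by
      rwa [Nat.cast_pow, Real.log_pow] at h2m
    calc Real.log 2 = 1 * Real.log 2 := (one_mul _).symm
    _ ≤ (ε * m) * Real.log 2 := by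
        apply mul_le_mul_of_nonneg_right hmε (Real.log_nonneg one_le_two)
    _ = ε * ((m : ℝ) * Real.log 2) := by ring
    _ ≤ ε * L := mul_le_mul_of_nonneg_left this hε.le
  obtain ⟨hθ1, hθ2⟩ := hθ
  -- centralizer ratio bounds
  have hcbound : ∀ x : G, x ≠ 1 →
      ((Nat.card (Subgroup.centralizer ({x} : Set G)) : ℝ) / n) ≤ ε := by
    intro x hx
    set H := Subgroup.centralizer ({x} : Set G) with hH
    have hHne : H ≠ ⊤ := centralizer_ne_top hnab hx
    have hdvd : n ∣ Nat.factorial H.index := card_dvd_factorial_index hHne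
    have hk : m < H.index := by
      by_contra hk
      push_neg at hk
      have : n ∣ Nat.factorial m :=
        hdvd.trans (Nat.factorial_dvd_factorial hk)
      exact absurd (Nat.le_of_dvd (Nat.factorial_pos m) this) (not_le.mpr hnfac)
    have hmul : Nat.card H * H.index = n := by
      rw [H.card_mul_index, Nat.card_eq_fintype_card]
    have hnat : Nat.card H * m ≤ n := by
      calc Nat.card H * m ≤ Nat.card H * H.index := Nat.mul_le_mul_left _ hk.le
      _ = n := hmul
    have hHm : (Nat.card H : ℝ) * m ≤ n := by exact_mod_cast hnat
    rw [div_le_iff₀ hnpos]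
    calc (Nat.card H : ℝ) = (Nat.card H * m) * (1/m) := by
          field_simp [hm]
    _ ≤ (n : ℝ) * (1/m) := by
          apply mul_le_mul_of_nonneg_right hHm (by positivity)
    _ ≤ ε * n := by
          rw [mul_one_div, div_le_iff₀ (by positivity : (0:ℝ) < (m:ℝ))]
          calc (n:ℝ) = 1 * n := (one_mul _).symm
          _ ≤ (ε * m) * n := mul_le_mul_of_nonneg_right hmε hnpos.le
          _ = ε * n * m := by ring
  have hcbound' : ∀ x : G,
      ((Nat.card (Subgroup.centralizer ({x} : Set G)) : ℝ) / n) ≤ 1 := by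
    intro x
    rw [div_le_one hnpos]
    have : Nat.card (Subgroup.centralizer ({x} : Set G)) ∣ n := by
      have := (Subgroup.centralizer ({x} : Set G)).card_subgroup_dvd_card
      rwa [Nat.card_eq_fintype_card (α := G)] at this
    exact_mod_cast Nat.le_of_dvd (by positivity) this
  have hcnonneg : ∀ x : G,
      (0:ℝ) ≤ ((Nat.card (Subgroup.centralizer ({x} : Set G)) : ℝ) / n) := by
    intro x; positivity
  -- bound the sum
  set f : G → ℝ := fun x => Real.exp (θ * L *
      ((Nat.card (Subgroup.centralizer ({x} : Set G)) : ℝ) / n)) with hf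
  have hterm : ∀ x : G, x ≠ 1 → f x ≤ Real.exp (ε * L) := by
    intro x hx
    apply Real.exp_le_exp.mpr
    have hc0 := hcnonneg x
    have hcε := hcbound x hx
    have h1 : θ * _ ≤ 1 * ε := mul_le_mul hθ2 hcε hc0 zero_le_one
    calc θ * L * (((Nat.card (Subgroup.centralizer ({x} : Set G)) : ℝ)) / n)
        = (θ * (((Nat.card (Subgroup.centralizer ({x} : Set G)) : ℝ)) / n)) * L := by ring
    _ ≤ ε * L := mul_le_mul_of_nonneg_right (by linarith) hLpos.le
  have hterm1 : ∀ x : G, f x ≤ Real.exp L := by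
    intro x
    apply Real.exp_le_exp.mpr
    have hc0 := hcnonneg x
    have hc1 := hcbound' x
    have h1 : θ * _ ≤ 1 * 1 := mul_le_mul hθ2 hc1 hc0 zero_le_one
    calc θ * L * (((Nat.card (Subgroup.centralizer ({x} : Set G)) : ℝ)) / n)
        = (θ * (((Nat.card (Subgroup.centralizer ({x} : Set G)) : ℝ)) / n)) * L := by ring
    _ ≤ 1 * L := mul_le_mul_of_nonneg_right (by linarith) hLpos.le
    _ = L := one_mul L
  have hsum : ∑ x : G, f x ≤ 2 * Real.exp ((1 + ε) * L) := by
    have hsplit : ∑ x : G, f x =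
        f 1 + ∑ x ∈ Finset.univ.erase 1, f x :=
      (Finset.add_sum_erase _ f (Finset.mem_univ 1)).symm
    have h1 : f 1 ≤ Real.exp L := hterm1 1
    have h2 : ∑ x ∈ Finset.univ.erase 1, f x ≤ (n : ℝ) * Real.exp (ε * L) := by
      calc ∑ x ∈ Finset.univ.erase 1, f x
          ≤ (Finset.univ.erase (1:G)).card • Real.exp (ε * L) :=
            Finset.sum_le_card_nsmul _ _ _ (fun x hx =>
              hterm x (Finset.ne_of_mem_erase hx))
      _ = ((Finset.univ.erase (1:G)).card : ℝ) * Real.exp (ε * L) := by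
            rw [nsmul_eq_mul]
      _ ≤ (n : ℝ) * Real.exp (ε * L) := by
            apply mul_le_mul_of_nonneg_right _ (Real.exp_nonneg _)
            have : (Finset.univ.erase (1:G)).card ≤ n := by
              calc (Finset.univ.erase (1:G)).card ≤ Finset.univ.card :=
                Finset.card_le_card (Finset.erase_subset _ _)
              _ = n := Finset.card_univ
            exact_mod_cast this
    have hexpL : Real.exp L = (n : ℝ) := Real.exp_log hnpos
    have hεL1 : (1:ℝ) ≤ Real.exp (ε * L) := Real.one_le_exp (by positivity)
    calc ∑ x : G, f x ≤ Real.exp L + (n:ℝ) * Real.exp (ε * L) := by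
          rw [hsplit]; exact add_le_add h1 h2
    _ ≤ (n:ℝ) * Real.exp (ε * L) + (n:ℝ) * Real.exp (ε * L) := by
          rw [hexpL]
          have : (n:ℝ) ≤ (n:ℝ) * Real.exp (ε * L) := le_mul_of_one_le_right hnpos.le hεL1
          linarith
    _ = 2 * ((n:ℝ) * Real.exp (ε * L)) := by ring
    _ = 2 * Real.exp ((1 + ε) * L) := by
          rw [← hexpL, ← Real.exp_add]; ring_nf
  -- conclude
  have hlogsum : Real.log (∑ x : G, f x) ≤ Real.log 2 + (1 + ε) * L := by
    calc Real.log (∑ x : G, f x) ≤ Real.log (2 * Real.exp ((1 + ε) * L)) := by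
          apply Real.log_le_log _ hsum
          apply Finset.sum_pos (fun x _ => Real.exp_pos _) Finset.univ_nonempty
    _ = Real.log 2 + (1 + ε) * L := by
          rw [Real.log_mul (by norm_num) (Real.exp_ne_zero _), Real.log_exp]
  have heq' : 2 * θ * L = Real.log (∑ x : G, f x) := heq
  have hfinal : 2 * θ * L ≤ (1 + 2 * ε) * L := by
    calc 2 * θ * L = Real.log (∑ x : G, f x) := heq'
    _ ≤ Real.log 2 + (1 + ε) * L := hlogsum
    _ ≤ ε * L + (1 + ε) * L := by linarith
    _ = (1 + 2 * ε) * L := by ring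
  nlinarith [hfinal, hLpos]
end
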